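/- arXiv:1511.00537 — 8 statements merged into one kernel-verified Lean document; each statement's English description precedes it below -/
import Mathlib

section
/- If v is a vertex of minimum degree in a finite simple graph G, then R'(G) − R'(G − v) ≥ 0, where R'(G) = Σ_{uv∈E(G)} 1/max{d(u),d(v)}. -/
open Finset

variable {V : Type*} [Fintype V] [DecidableEq V]

/-- Modified Randić index `R'(G) = Σ_{uv∈E} 1/max(d(u),d(v))`. -/
noncomputable def Rprime (G : SimpleGraph V) [DecidableRel G.Adj] : ℝ :=
  ∑ e ∈ G.edgeFinset,
    Sym2.lift ⟨fun u v => 1 / max (G.degree u : ℝ) (G.degree v),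
      fun u v => by simp [max_comm]⟩ e

/-- Harmonic index `H(G) = Σ_{uv∈E} 2/(d(u)+d(v))`. -/
noncomputable def harmonicIndex (G : SimpleGraph V) [DecidableRel G.Adj] : ℝ :=
  ∑ e ∈ G.edgeFinset,
    Sym2.lift ⟨fun u v => 2 / ((G.degree u : ℝ) + (G.degree v)),
      fun u v => by simp [add_comm]⟩ e

/-- Randić index `R(G) = Σ_{uv∈E} 1/√(d(u)d(v))`. -/
noncomputable def randic (G : SimpleGraph V) [DecidableRel G.Adj] : ℝ :=
  ∑ e ∈ G.edgeFinset,
    Sym2.lift ⟨fun u v => 1 / Real.sqrt ((G.degree u : ℝ) * (G.degree v)),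
      fun u v => by simp [mul_comm]⟩ e

/-- Coloring number: least `k` such that some linear ordering of the vertices has
each vertex preceded by fewer than `k` of its neighbors. -/
noncomputable def coloringNumber (G : SimpleGraph V) : ℕ :=
  sInf {k | ∃ L : LinearOrder V, ∀ v, {u | G.Adj u v ∧ L.lt u v}.ncard < k}

/-- Degeneracy: max over (induced) subgraphs of the minimum degree. -/
def degeneracy (G : SimpleGraph V) [DecidableRel G.Adj] : ℕ :=
  Finset.univ.sup fun s : Finset V =>
    if h : s.Nonempty then s.inf' h fun v => (s.filter fun w => G.Adj v w).card else 0

/-- Achromatic number: largest `k` admitting a complete `k`-coloring. -/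
noncomputable def achromaticNumber (G : SimpleGraph V) : ℕ :=
  sSup {k | ∃ C : G.Coloring (Fin k),
    ∀ c₁ c₂ : Fin k, c₁ ≠ c₂ → ∃ u v, G.Adj u v ∧ C u = c₁ ∧ C v = c₂}

/-- List chromatic number. -/
noncomputable def listChromaticNumber (G : SimpleGraph V) : ℕ :=
  sInf {k | ∀ L : V → Finset ℕ, (∀ v, k ≤ (L v).card) →
    ∃ c : V → ℕ, (∀ v, c v ∈ L v) ∧ ∀ ⦃u v⦄, G.Adj u v → c u ≠ c v}

/-- The eigenvalues of the (real) adjacency matrix of `G`. -/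
noncomputable def adjEigenvalues (G : SimpleGraph V) [DecidableRel G.Adj] : V → ℝ :=
  Matrix.IsHermitian.eigenvalues (A := G.adjMatrix ℝ)
    (by rw [Matrix.IsHermitian, Matrix.conjTranspose_eq_transpose_of_trivial]
        exact SimpleGraph.isSymm_adjMatrix G)

/-- `s⁺`: the sum of squares of the positive adjacency eigenvalues. -/
noncomputable def sPlus (G : SimpleGraph V) [DecidableRel G.Adj] : ℝ :=
  ∑ i : V, if 0 < adjEigenvalues G i then (adjEigenvalues G i) ^ 2 else 0

/-- The largest adjacency eigenvalue `μ`. -/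
noncomputable def specRad (G : SimpleGraph V) [DecidableRel G.Adj] : ℝ :=
  ⨆ i, adjEigenvalues G i

/-- `K_k • K_{1,n-k}`: the clique `K_k` on the first `k` vertices of `Fin n`, with the
vertex `k-1` identified with the center of a star whose leaves are the remaining vertices.
For `k = 1` this is the star `K_{1,n-1}`. -/
def cliqueStar (n k : ℕ) : SimpleGraph (Fin n) where
  Adj u v := u ≠ v ∧ (((u : ℕ) < k ∧ (v : ℕ) < k) ∨
    ((u : ℕ) + 1 = k ∧ k ≤ (v : ℕ)) ∨ ((v : ℕ) + 1 = k ∧ k ≤ (u : ℕ)))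
  symm := ⟨by rintro u v ⟨h1, h2⟩; exact ⟨h1.symm, by tauto⟩⟩
  loopless := ⟨by rintro u ⟨h1, -⟩; exact h1 rfl⟩

instance (n k : ℕ) : DecidableRel (cliqueStar n k).Adj := fun u v => by
  unfold cliqueStar; simp only; infer_instance


instance instDecInduce (G : SimpleGraph V) [DecidableRel G.Adj] (s : Set V)
    [DecidablePred (· ∈ s)] : DecidableRel (G.induce s).Adj :=
  fun a b => inferInstanceAs (Decidable (G.Adj a b))

lemma edge_sum_eq {W : Type*} [Fintype W] [DecidableEq W]
    (G : SimpleGraph W) [DecidableRel G.Adj]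
    (f : W → W → ℝ) (hf : ∀ u w, f u w = f w u) :
    ∑ e ∈ G.edgeFinset, Sym2.lift ⟨f, hf⟩ e
      = (1/2) * ∑ u, ∑ w, if G.Adj u w then f u w else 0 := by
  have key : ∑ p ∈ (univ ×ˢ univ).filter (fun p : W × W => G.Adj p.1 p.2), f p.1 p.2
      = ∑ e ∈ G.edgeFinset, 2 * Sym2.lift ⟨f, hf⟩ e := by
    rw [← Finset.sum_fiberwise_of_maps_to (g := fun p : W × W => Sym2.mk p.1 p.2)
      (t := G.edgeFinset)
      (fun p hp => by
        simp only [mem_filter] at hp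
        simpa [SimpleGraph.mem_edgeFinset] using hp.2)]
    refine Finset.sum_congr rfl fun e he => ?_
    induction e with
    | _ a b =>
      simp only [SimpleGraph.mem_edgeFinset, SimpleGraph.mem_edgeSet] at he
      have hab : a ≠ b := he.ne
      have heq : ((univ ×ˢ univ).filter (fun p : W × W => G.Adj p.1 p.2)).filter
          (fun p => Sym2.mk p.1 p.2 = s(a,b)) = {(a,b), (b,a)} := by
        ext ⟨u,w⟩
        simp only [mem_filter, mem_product, mem_univ, true_and,
          mem_insert, mem_singleton, Prod.mk.injEq, Sym2.eq_iff]
        constructor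
        · rintro ⟨-, (⟨rfl,rfl⟩|⟨rfl,rfl⟩)⟩ <;> tauto
        · rintro (⟨rfl,rfl⟩|⟨rfl,rfl⟩)
          · exact ⟨he, Or.inl ⟨rfl, rfl⟩⟩
          · exact ⟨he.symm, Or.inr ⟨rfl, rfl⟩⟩
      rw [heq, Finset.sum_pair (by simp [hab, Ne.symm hab])]
      simp [hf a b, two_mul]
  have h2 : ∑ u, ∑ w, (if G.Adj u w then f u w else 0)
      = ∑ p ∈ (univ ×ˢ univ).filter (fun p : W × W => G.Adj p.1 p.2), f p.1 p.2 := by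
    rw [Finset.sum_filter, ← Finset.sum_product']
  rw [h2, key, Finset.mul_sum]
  exact Finset.sum_congr rfl fun e he => by ring

lemma induce_degree_eq (G : SimpleGraph V) [DecidableRel G.Adj] (v : V)
    (a : ({u | u ≠ v} : Set V)) :
    (G.induce {u | u ≠ v}).degree a = ((G.neighborFinset a.val).erase v).card := by
  rw [SimpleGraph.degree]
  apply Finset.card_bij (fun b _ => b.val)
  · intro b hb
    simp only [SimpleGraph.mem_neighborFinset, SimpleGraph.comap_adj] at hb
    simp only [Finset.mem_erase, SimpleGraph.mem_neighborFinset]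
    exact ⟨b.prop, hb⟩
  · intro b _ b' _ h; exact Subtype.ext h
  · intro w hw
    simp only [Finset.mem_erase, SimpleGraph.mem_neighborFinset] at hw
    exact ⟨⟨w, hw.1⟩, by simp [SimpleGraph.mem_neighborFinset, hw.2], rfl⟩

theorem rprime_deleteVertex_le (G : SimpleGraph V) [DecidableRel G.Adj] (v : V)
    (hv : G.degree v = G.minDegree) :
    0 ≤ Rprime G - Rprime (G.induce {u | u ≠ v}) := by
  classical
  set S : Finset V := univ.filter (· ≠ v) with hS
  set d : V → ℝ := fun u => (G.degree u : ℝ) with hd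
  set n : V → ℕ := fun u => ((G.neighborFinset u).erase v).card with hn
  set t : V → V → ℝ := fun u w => if G.Adj u w then 1 / max (d u) (d w) else 0 with ht
  set t' : V → V → ℝ := fun u w => if G.Adj u w then 1 / max (n u : ℝ) (n w) else 0 with ht'
  -- Rprime G as a pair sum
  have hRG : Rprime G = (1/2) * ∑ u, ∑ w, t u w :=
    edge_sum_eq G _ _
  -- Rprime of the induced graph as a pair sum over S
  have hRG' : Rprime (G.induce {u | u ≠ v}) = (1/2) * ∑ u ∈ S, ∑ w ∈ S, t' u w := by
    rw [Rprime, edge_sum_eq]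
    congr 1
    have hmem : ∀ x : V, x ∈ S ↔ x ∈ ({u | u ≠ v} : Set V) := by
      intro x; simp [hS]
    rw [Finset.sum_subtype S hmem]
    refine Finset.sum_congr rfl fun a _ => ?_
    rw [Finset.sum_subtype S hmem]
    refine Finset.sum_congr rfl fun b _ => ?_
    have hadj : (G.induce {u | u ≠ v}).Adj a b ↔ G.Adj a.val b.val := by
      simp [SimpleGraph.comap_adj]
    rw [induce_degree_eq, induce_degree_eq]
    simp only [ht', hadj, hn]
  -- basic degree facts
  have hδ : ∀ u, G.degree v ≤ G.degree u := fun u => hv ▸ G.minDegree_le_degree u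
  have hnv : ∀ u, G.Adj u v → n u = G.degree u - 1 := by
    intro u hu
    simp only [hn]
    rw [Finset.card_erase_of_mem (by simpa [SimpleGraph.mem_neighborFinset] using hu)]
    rfl
  have hnnv : ∀ u, ¬ G.Adj u v → n u = G.degree u := by
    intro u hu
    simp only [hn]
    rw [Finset.erase_eq_of_notMem (by simpa [SimpleGraph.mem_neighborFinset] using hu)]
    rfl
  have hn_lb : ∀ u w, G.Adj u w → w ≠ v → 1 ≤ n u := by
    intro u w huw hwv
    refine Finset.card_pos.mpr ⟨w, ?_⟩
    simp [hn, hwv, SimpleGraph.mem_neighborFinset, huw]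
  have hdeg_pos : ∀ u w, G.Adj u w → (1 : ℝ) ≤ d u := by
    intro u w huw
    have : 1 ≤ G.degree u :=
      Finset.card_pos.mpr ⟨w, by simp [SimpleGraph.mem_neighborFinset, huw]⟩
    simp only [hd]
    exact_mod_cast this
  -- the charging function
  set B : V → V → ℝ := fun u w =>
    if G.Adj u w ∧ G.Adj u v ∧ G.degree w ≤ G.degree u
    then 1 / (d u * (d u - 1)) else 0 with hB
  have hBnonneg : ∀ u w, 0 ≤ B u w := by
    intro u w
    simp only [hB]
    split
    · rename_i h
      have h1 : (1:ℝ) ≤ d u := hdeg_pos u w h.1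
      have : 0 ≤ d u * (d u - 1) := mul_nonneg (by linarith) (by linarith)
      positivity
    · exact le_refl _
  -- key pointwise case
  have key_case : ∀ u w, u ≠ v → w ≠ v → G.Adj u w → G.degree w ≤ G.degree u →
      t' u w - t u w ≤ B u w := by
    intro u w hu hw hadj hdeg
    have hdw : (d w : ℝ) ≤ d u := by simp only [hd]; exact_mod_cast hdeg
    have htval : t u w = 1 / d u := by
      simp only [ht, if_pos hadj, max_eq_left hdw]
    have hdu1 : (1:ℝ) ≤ d u := hdeg_pos u w hadj
    by_cases huv : G.Adj u v
    · -- u is adjacent to v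
      have hBval : B u w = 1 / (d u * (d u - 1)) := by
        simp only [hB]
        rw [if_pos (show G.Adj u w ∧ G.Adj u v ∧ G.degree w ≤ G.degree u from ⟨hadj, huv, hdeg⟩)]
      have hdu2 : (2:ℝ) ≤ d u := by
        have hsub : ({v, w} : Finset V) ⊆ G.neighborFinset u := by
          intro x hx
          simp only [Finset.mem_insert, Finset.mem_singleton] at hx
          rcases hx with rfl | rfl <;>
            simp [SimpleGraph.mem_neighborFinset, huv, hadj]
        have : ({v, w} : Finset V).card ≤ G.degree u := Finset.card_le_card hsub
        rw [Finset.card_pair (Ne.symm hw)] at this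
        simp only [hd]; exact_mod_cast this
      have hnu : (n u : ℝ) = d u - 1 := by
        rw [hnv u huv]
        have : 1 ≤ G.degree u := by
          simp only [hd] at hdu1; exact_mod_cast hdu1
        push_cast [Nat.cast_sub this]
        rfl
      have hub : t' u w ≤ 1 / (d u - 1) := by
        simp only [ht', if_pos hadj]
        apply one_div_le_one_div_of_le (by linarith)
        rw [← hnu]; exact le_max_left _ _
      have heq : 1 / (d u - 1) - 1 / d u = 1 / (d u * (d u - 1)) := by
        have h1 : d u ≠ 0 := by linarith
        have h2 : d u - 1 ≠ 0 := by linarith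
        field_simp
        ring
      rw [htval, hBval]
      linarith
    · -- u is not adjacent to v : no drop in max
      have hBval : 0 ≤ B u w := hBnonneg u w
      have hnu : (n u : ℝ) = d u := by rw [hnnv u huv]
      have hub : t' u w ≤ 1 / d u := by
        simp only [ht', if_pos hadj]
        apply one_div_le_one_div_of_le (by linarith)
        rw [← hnu]; exact le_max_left _ _
      rw [htval]
      linarith
  -- symmetry of t, t'
  have htsymm : ∀ u w, t u w = t w u := by
    intro u w
    simp only [ht]
    by_cases h : G.Adj u w
    · rw [if_pos h, if_pos h.symm, max_comm]
    · rw [if_neg h, if_neg (fun hc => h hc.symm)]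
  have ht'symm : ∀ u w, t' u w = t' w u := by
    intro u w
    simp only [ht']
    by_cases h : G.Adj u w
    · rw [if_pos h, if_pos h.symm, max_comm]
    · rw [if_neg h, if_neg (fun hc => h hc.symm)]
  -- claim 1
  have claim1 : ∀ u ∈ S, ∀ w ∈ S, t' u w - t u w ≤ B u w + B w u := by
    intro u hu w hw
    simp only [hS, Finset.mem_filter] at hu hw
    by_cases hadj : G.Adj u w
    · rcases le_total (G.degree w) (G.degree u) with h | h
      · have := key_case u w hu.2 hw.2 hadj h
        have := hBnonneg w u
        linarith
      · have := key_case w u hw.2 hu.2 hadj.symm h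
        rw [htsymm u w, ht'symm u w]
        have := hBnonneg u w
        linarith
    · simp only [ht, ht', hB, if_neg hadj,
        if_neg (fun hc : G.Adj w u ∧ _ => hadj hc.1.symm),
        if_neg (fun hc : G.Adj u w ∧ _ => hadj hc.1)]
      norm_num
  -- claim 2
  have claim2 : ∀ u ∈ S, ∑ w ∈ S, B u w ≤ t u v := by
    intro u hu
    simp only [hS, Finset.mem_filter] at hu
    by_cases huv : G.Adj u v
    · have htuv : t u v = 1 / d u := by
        have : (d v : ℝ) ≤ d u := by simp only [hd]; exact_mod_cast hδ u
        simp only [ht, if_pos huv, max_eq_left this]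
      have hdu1 : (1:ℝ) ≤ d u := hdeg_pos u v huv
      set c : ℝ := 1 / (d u * (d u - 1)) with hc
      have hcnn : 0 ≤ c := by
        have : 0 ≤ d u * (d u - 1) := mul_nonneg (by linarith) (by linarith)
        positivity
      have hsum : ∑ w ∈ S, B u w
          = ((S.filter (fun w => G.Adj u w ∧ G.Adj u v ∧ G.degree w ≤ G.degree u)).card : ℝ) * c := by
        rw [← Finset.sum_filter, Finset.sum_const, nsmul_eq_mul]
      have hcard : (S.filter (fun w => G.Adj u w ∧ G.Adj u v ∧ G.degree w ≤ G.degree u)).card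
          ≤ G.degree u - 1 := by
        have hsub : S.filter (fun w => G.Adj u w ∧ G.Adj u v ∧ G.degree w ≤ G.degree u)
            ⊆ (G.neighborFinset u).erase v := by
          intro w hwm
          simp only [hS, Finset.mem_filter, Finset.mem_univ, true_and] at hwm
          simp only [Finset.mem_erase, SimpleGraph.mem_neighborFinset]
          exact ⟨hwm.1, hwm.2.1⟩
        have := Finset.card_le_card hsub
        rwa [Finset.card_erase_of_mem
          (by simpa [SimpleGraph.mem_neighborFinset] using huv)] at this
      have hdnat : 1 ≤ G.degree u := by
        simp only [hd] at hdu1; exact_mod_cast hdu1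
      have hcardR : ((S.filter (fun w => G.Adj u w ∧ G.Adj u v ∧ G.degree w ≤ G.degree u)).card : ℝ)
          ≤ d u - 1 := by
        have : ((G.degree u - 1 : ℕ) : ℝ) = d u - 1 := by
          push_cast [Nat.cast_sub hdnat]; rfl
        rw [← this]
        exact_mod_cast hcard
      have hfin : (d u - 1) * c ≤ 1 / d u := by
        rcases (show G.degree u = 1 ∨ 2 ≤ G.degree u by omega) with h1 | h2
        · have : d u = 1 := by simp only [hd, h1]; norm_num
          rw [this]; norm_num [hc, this]
        · have hdu2 : (2:ℝ) ≤ d u := by simp only [hd]; exact_mod_cast h2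
          have h1 : d u ≠ 0 := by linarith
          have h2' : d u - 1 ≠ 0 := by linarith
          have heq2 : (d u - 1) * c = 1 / d u := by
            rw [hc]; field_simp
          rw [heq2]
      calc ∑ w ∈ S, B u w
          = ((S.filter (fun w => G.Adj u w ∧ G.Adj u v ∧ G.degree w ≤ G.degree u)).card : ℝ) * c := hsum
        _ ≤ (d u - 1) * c := mul_le_mul_of_nonneg_right hcardR hcnn
        _ ≤ 1 / d u := hfin
        _ = t u v := htuv.symm
    · have : ∀ w ∈ S, B u w = 0 := by
        intro w _
        simp only [hB, if_neg (fun hc : _ ∧ G.Adj u v ∧ _ => huv hc.2.1)]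
      rw [Finset.sum_congr rfl this, Finset.sum_const_zero]
      simp only [ht, if_neg huv]
      exact le_refl _
  -- split the full double sum
  have hsplit : ∀ g : V → ℝ, ∑ u, g u = (∑ u ∈ S, g u) + g v := by
    intro g
    rw [← Finset.sum_filter_add_sum_filter_not univ (· ≠ v) g]
    congr 1
    have : univ.filter (fun u => ¬ u ≠ v) = {v} := by ext x; simp
    rw [this, Finset.sum_singleton]
  have hfull : ∑ u, ∑ w, t u w = (∑ u ∈ S, ∑ w ∈ S, t u w) + 2 * ∑ u ∈ S, t u v := by
    rw [hsplit (fun u => ∑ w, t u w)]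
    have h1 : ∑ u ∈ S, ∑ w, t u w = ∑ u ∈ S, ((∑ w ∈ S, t u w) + t u v) :=
      Finset.sum_congr rfl fun u _ => hsplit _
    have h2 : ∑ w, t v w = ∑ w ∈ S, t w v := by
      rw [hsplit (fun w => t v w)]
      have hvv : t v v = 0 := by simp [ht]
      rw [hvv, add_zero]
      exact Finset.sum_congr rfl fun w _ => htsymm v w
    rw [h1, h2, Finset.sum_add_distrib]
    ring
  -- combine the claims
  have hcl : ∑ u ∈ S, ∑ w ∈ S, (t' u w - t u w) ≤ 2 * ∑ u ∈ S, t u v := by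
    have step1 : ∑ u ∈ S, ∑ w ∈ S, (t' u w - t u w)
        ≤ ∑ u ∈ S, ∑ w ∈ S, (B u w + B w u) :=
      Finset.sum_le_sum fun u hu => Finset.sum_le_sum fun w hw => claim1 u hu w hw
    have step2 : ∑ u ∈ S, ∑ w ∈ S, (B u w + B w u) = 2 * ∑ u ∈ S, ∑ w ∈ S, B u w := by
      have : ∑ u ∈ S, ∑ w ∈ S, (B u w + B w u)
          = (∑ u ∈ S, ∑ w ∈ S, B u w) + ∑ u ∈ S, ∑ w ∈ S, B w u := by
        rw [← Finset.sum_add_distrib]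
        exact Finset.sum_congr rfl fun u _ => Finset.sum_add_distrib
      rw [this, Finset.sum_comm (f := fun u w => B w u)]
      ring
    have step3 : ∑ u ∈ S, ∑ w ∈ S, B u w ≤ ∑ u ∈ S, t u v :=
      Finset.sum_le_sum fun u hu => claim2 u hu
    calc ∑ u ∈ S, ∑ w ∈ S, (t' u w - t u w)
        ≤ 2 * ∑ u ∈ S, ∑ w ∈ S, B u w := by rw [← step2]; exact step1
      _ ≤ 2 * ∑ u ∈ S, t u v := by linarith
  have hdiff : ∑ u ∈ S, ∑ w ∈ S, (t' u w - t u w)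
      = (∑ u ∈ S, ∑ w ∈ S, t' u w) - ∑ u ∈ S, ∑ w ∈ S, t u w := by
    rw [← Finset.sum_sub_distrib]
    exact Finset.sum_congr rfl fun u _ => Finset.sum_sub_distrib _ _
  rw [hRG, hRG', hfull]
  linarith [hcl, hdiff]
end

section
/- If T is a tree of order n ≥ 2, then R'(T) ≥ 1, with equality if and only if T is the star K_{1,n−1}. -/
open Finset

variable {V : Type*} [Fintype V] [DecidableEq V]

section TreeRprimeAux

set_option linter.unusedSectionVars false

/-- `G` is a star with center `c`. -/
def IsStarWith (G : SimpleGraph V) (c : V) : Prop :=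
  ∀ u v, G.Adj u v ↔ ((u = c ∧ v ≠ c) ∨ (v = c ∧ u ≠ c))

lemma star_neighborFinset {G : SimpleGraph V} [DecidableRel G.Adj] {c : V}
    (h : IsStarWith G c) : G.neighborFinset c = Finset.univ.erase c := by
  ext w
  simp only [SimpleGraph.mem_neighborFinset, Finset.mem_erase, Finset.mem_univ, and_true, h c w]
  tauto

lemma star_degree_center {G : SimpleGraph V} [DecidableRel G.Adj] {c : V}
    (h : IsStarWith G c) : G.degree c = Fintype.card V - 1 := by
  rw [← SimpleGraph.card_neighborFinset_eq_degree, star_neighborFinset h,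
    Finset.card_erase_of_mem (Finset.mem_univ c), Finset.card_univ]

lemma star_degree_leaf {G : SimpleGraph V} [DecidableRel G.Adj] {c v : V}
    (h : IsStarWith G c) (hv : v ≠ c) : G.degree v = 1 := by
  rw [← SimpleGraph.card_neighborFinset_eq_degree]
  have : G.neighborFinset v = {c} := by
    ext w
    simp only [SimpleGraph.mem_neighborFinset, Finset.mem_singleton, h v w]
    constructor
    · rintro (⟨h1, h2⟩ | ⟨h1, h2⟩) <;> tauto
    · rintro rfl; tauto
  rw [this, Finset.card_singleton]

lemma cast_card_sub_one (hn : 2 ≤ Fintype.card V) :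
    ((Fintype.card V - 1 : ℕ) : ℝ) = (Fintype.card V : ℝ) - 1 := by
  have : 1 ≤ Fintype.card V := by omega
  push_cast [Nat.cast_sub this]
  ring

lemma star_term {G : SimpleGraph V} [DecidableRel G.Adj] {c : V}
    (hn : 2 ≤ Fintype.card V) (h : IsStarWith G c) {e : Sym2 V} (he : e ∈ G.edgeFinset) :
    Sym2.lift ⟨fun u v => 1 / max (G.degree u : ℝ) (G.degree v),
      fun u v => by simp [max_comm]⟩ e = 1 / ((Fintype.card V : ℝ) - 1) := by
  have hcast := cast_card_sub_one hn
  have h2 : (1 : ℝ) ≤ (Fintype.card V : ℝ) - 1 := by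
    have : (2 : ℝ) ≤ (Fintype.card V : ℝ) := by exact_mod_cast hn
    linarith
  induction e with
  | _ u v =>
    rw [SimpleGraph.mem_edgeFinset, SimpleGraph.mem_edgeSet] at he
    rw [Sym2.lift_mk]
    show (1 : ℝ) / max (G.degree u : ℝ) (G.degree v : ℝ) = 1 / ((Fintype.card V : ℝ) - 1)
    rcases (h u v).1 he with ⟨rfl, hv⟩ | ⟨rfl, hu⟩
    · rw [star_degree_center h, star_degree_leaf h hv, hcast]
      norm_num [max_eq_left h2]
    · rw [star_degree_center h, star_degree_leaf h hu, hcast]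
      norm_num [max_eq_right h2]

lemma sum_const_edge {G : SimpleGraph V} [DecidableRel G.Adj]
    (hT : G.IsTree) (hn : 2 ≤ Fintype.card V) :
    ∑ _e ∈ G.edgeFinset, (1 / ((Fintype.card V : ℝ) - 1)) = 1 := by
  have hc : G.edgeFinset.card = Fintype.card V - 1 := by
    have := hT.card_edgeFinset; omega
  rw [Finset.sum_const, nsmul_eq_mul, hc, cast_card_sub_one hn]
  have : (Fintype.card V : ℝ) - 1 ≠ 0 := by
    have : (2 : ℝ) ≤ (Fintype.card V : ℝ) := by exact_mod_cast hn
    linarith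
  field_simp

lemma term_ge {G : SimpleGraph V} [DecidableRel G.Adj]
    (hn : 2 ≤ Fintype.card V) {e : Sym2 V} (he : e ∈ G.edgeFinset) :
    1 / ((Fintype.card V : ℝ) - 1) ≤ Sym2.lift ⟨fun u v => 1 / max (G.degree u : ℝ) (G.degree v),
      fun u v => by simp [max_comm]⟩ e := by
  induction e with
  | _ u v =>
    rw [SimpleGraph.mem_edgeFinset, SimpleGraph.mem_edgeSet] at he
    rw [Sym2.lift_mk]
    show 1 / ((Fintype.card V : ℝ) - 1) ≤ (1 : ℝ) / max (G.degree u : ℝ) (G.degree v : ℝ)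
    have hdu : (G.degree u : ℝ) ≤ (Fintype.card V : ℝ) - 1 := by
      rw [← cast_card_sub_one hn]
      exact_mod_cast Nat.le_sub_one_of_lt (G.degree_lt_card_verts u)
    have hdv : (G.degree v : ℝ) ≤ (Fintype.card V : ℝ) - 1 := by
      rw [← cast_card_sub_one hn]
      exact_mod_cast Nat.le_sub_one_of_lt (G.degree_lt_card_verts v)
    have hpos : (0 : ℝ) < G.degree u := by
      have : 0 < G.degree u := (G.degree_pos_iff_exists_adj u).2 ⟨v, he⟩
      exact_mod_cast this
    exact one_div_le_one_div_of_le (lt_of_lt_of_le hpos (le_max_left _ _))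
      (max_le hdu hdv)

lemma exists_center {G : SimpleGraph V} [DecidableRel G.Adj]
    (hn : 2 ≤ Fintype.card V) (hT : G.IsTree)
    (hall : ∀ e ∈ G.edgeFinset,
      Sym2.lift ⟨fun u v => 1 / max (G.degree u : ℝ) (G.degree v),
        fun u v => by simp [max_comm]⟩ e = 1 / ((Fintype.card V : ℝ) - 1)) :
    ∃ c, IsStarWith G c := by
  have hc : G.edgeFinset.card = Fintype.card V - 1 := by
    have := hT.card_edgeFinset; omega
  have hone : (1 : ℝ) ≤ (Fintype.card V : ℝ) - 1 := by
    have : (2 : ℝ) ≤ (Fintype.card V : ℝ) := by exact_mod_cast hn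
    linarith
  have hne : G.edgeFinset.Nonempty := Finset.card_pos.1 (by omega)
  obtain ⟨e, he⟩ := hne
  have hmax : ∃ c0, G.degree c0 = Fintype.card V - 1 := by
    induction e with
    | _ u v =>
      have hterm0 := hall _ he
      rw [Sym2.lift_mk] at hterm0
      have hterm : (1 : ℝ) / max (G.degree u : ℝ) (G.degree v : ℝ)
          = 1 / ((Fintype.card V : ℝ) - 1) := hterm0
      have hmaxpos : (0 : ℝ) < max (G.degree u : ℝ) (G.degree v : ℝ) := by
        rw [SimpleGraph.mem_edgeFinset, SimpleGraph.mem_edgeSet] at he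
        have : 0 < G.degree u := (G.degree_pos_iff_exists_adj u).2 ⟨v, he⟩
        have : (0 : ℝ) < G.degree u := by exact_mod_cast this
        exact lt_of_lt_of_le this (le_max_left _ _)
      have hmeq : max (G.degree u : ℝ) (G.degree v : ℝ) = (Fintype.card V : ℝ) - 1 := by
        rw [div_eq_div_iff hmaxpos.ne' (by linarith)] at hterm
        linarith
      rcases max_cases (G.degree u : ℝ) (G.degree v : ℝ) with ⟨h1, _⟩ | ⟨h1, _⟩
      · refine ⟨u, ?_⟩
        have : (G.degree u : ℝ) = ((Fintype.card V - 1 : ℕ) : ℝ) := by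
          rw [cast_card_sub_one hn]; rw [h1] at hmeq; exact hmeq
        exact_mod_cast this
      · refine ⟨v, ?_⟩
        have : (G.degree v : ℝ) = ((Fintype.card V - 1 : ℕ) : ℝ) := by
          rw [cast_card_sub_one hn]; rw [h1] at hmeq; exact hmeq
        exact_mod_cast this
  obtain ⟨c0, hdeg⟩ := hmax
  have hinc : G.incidenceFinset c0 = G.edgeFinset := by
    apply Finset.eq_of_subset_of_card_le
    · rw [SimpleGraph.incidenceFinset_eq_filter]
      exact Finset.filter_subset _ _
    · rw [SimpleGraph.card_incidenceFinset_eq_degree, hdeg, hc]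
  have hnbr : G.neighborFinset c0 = Finset.univ.erase c0 := by
    apply Finset.eq_of_subset_of_card_le
    · intro w hw
      rw [SimpleGraph.mem_neighborFinset] at hw
      exact Finset.mem_erase.2 ⟨(G.ne_of_adj hw).symm, Finset.mem_univ w⟩
    · rw [Finset.card_erase_of_mem (Finset.mem_univ c0), Finset.card_univ,
        SimpleGraph.card_neighborFinset_eq_degree, hdeg]
  refine ⟨c0, fun u v => ⟨?_, ?_⟩⟩
  · intro huv
    have hm : s(u, v) ∈ G.incidenceFinset c0 := by
      rw [hinc, SimpleGraph.mem_edgeFinset, SimpleGraph.mem_edgeSet]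
      exact huv
    rw [SimpleGraph.mem_incidenceFinset] at hm
    have hcm : c0 ∈ s(u, v) := hm.2
    rw [Sym2.mem_iff] at hcm
    rcases hcm with rfl | rfl
    · exact Or.inl ⟨rfl, (G.ne_of_adj huv).symm⟩
    · exact Or.inr ⟨rfl, G.ne_of_adj huv⟩
  · rintro (⟨rfl, hv⟩ | ⟨rfl, hu⟩)
    · have : v ∈ G.neighborFinset u := by
        rw [hnbr]; exact Finset.mem_erase.2 ⟨hv, Finset.mem_univ v⟩
      exact (SimpleGraph.mem_neighborFinset _ _ _).1 this
    · have : u ∈ G.neighborFinset v := by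
        rw [hnbr]; exact Finset.mem_erase.2 ⟨hu, Finset.mem_univ u⟩
      exact ((SimpleGraph.mem_neighborFinset _ _ _).1 this).symm

lemma cliqueStar_adj_one {n : ℕ} [NeZero n] (a b : Fin n) :
    (cliqueStar n 1).Adj a b ↔ ((a = 0 ∧ ¬ b = 0) ∨ (b = 0 ∧ ¬ a = 0)) := by
  show (a ≠ b ∧ _) ↔ _
  simp only [Fin.ext_iff, Fin.val_zero, ne_eq]
  omega

lemma star_iso {G : SimpleGraph V} {c : V} (hn : 2 ≤ Fintype.card V) (h : IsStarWith G c) :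
    Nonempty (G ≃g cliqueStar (Fintype.card V) 1) := by
  have : NeZero (Fintype.card V) := ⟨by omega⟩
  let e0 := Fintype.equivFin V
  let φ : V ≃ Fin (Fintype.card V) := e0.trans (Equiv.swap (e0 c) 0)
  have hφc : φ c = 0 := by simp [φ, Equiv.swap_apply_left]
  have hφ : ∀ u, φ u = 0 ↔ u = c := fun u => by
    rw [← hφc]
    exact ⟨fun h' => φ.injective h', fun h' => by rw [h']⟩
  refine ⟨⟨φ, ?_⟩⟩
  intro u v
  rw [cliqueStar_adj_one, h u v, hφ, hφ]

lemma iso_star {G : SimpleGraph V} (hn : 2 ≤ Fintype.card V)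
    (f : G ≃g cliqueStar (Fintype.card V) 1) : ∃ c, IsStarWith G c := by
  have : NeZero (Fintype.card V) := ⟨by omega⟩
  refine ⟨f.symm 0, fun u v => ?_⟩
  rw [← f.map_rel_iff, cliqueStar_adj_one]
  have hf : ∀ w, f w = 0 ↔ w = f.symm 0 := fun w => by
    constructor
    · intro h; rw [← h]; simp
    · intro h; rw [h]; simp
  rw [hf, hf]

end TreeRprimeAux

theorem tree_rprime (G : SimpleGraph V) [DecidableRel G.Adj]
    (hn : 2 ≤ Fintype.card V) (hT : G.IsTree) :
    1 ≤ Rprime G ∧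
      (Rprime G = 1 ↔ Nonempty (G ≃g cliqueStar (Fintype.card V) 1)) := by
  have hsumc := sum_const_edge hT hn
  have h1 : 1 ≤ Rprime G := by
    rw [Rprime]
    calc (1 : ℝ) = ∑ _e ∈ G.edgeFinset, 1 / ((Fintype.card V : ℝ) - 1) := hsumc.symm
    _ ≤ _ := Finset.sum_le_sum fun e he => term_ge hn he
  refine ⟨h1, ⟨?_, ?_⟩⟩
  · intro heq
    have hall : ∀ e ∈ G.edgeFinset,
        Sym2.lift ⟨fun u v => 1 / max (G.degree u : ℝ) (G.degree v),
          fun u v => by simp [max_comm]⟩ e = 1 / ((Fintype.card V : ℝ) - 1) := by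
      by_contra hcon
      push_neg at hcon
      obtain ⟨e, he, hne⟩ := hcon
      have hlt : (1 : ℝ) < Rprime G := by
        rw [Rprime]
        calc (1 : ℝ) = ∑ _e ∈ G.edgeFinset, 1 / ((Fintype.card V : ℝ) - 1) := hsumc.symm
        _ < _ := Finset.sum_lt_sum (fun i hi => term_ge hn hi)
          ⟨e, he, lt_of_le_of_ne (term_ge hn he) (Ne.symm hne)⟩
      linarith
    obtain ⟨c, hc⟩ := exists_center hn hT hall
    exact star_iso hn hc
  · rintro ⟨f⟩
    obtain ⟨c, hc⟩ := iso_star hn f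
    rw [Rprime, Finset.sum_congr rfl fun e he => star_term hn hc he]
    exact hsumc
end

section
/- For any graph G of order n without isolated vertices, col(G) ≤ 2R'(G), where col(G) is the coloring number (degeneracy plus one) and R'(G) = Σ_{uv∈E} 1/max{d(u),d(v)}. -/
open Finset

variable {V : Type*} [Fintype V] [DecidableEq V]

namespace ColAux

/-- An arbitrary linear order on a finite type. -/
noncomputable def ord0 (V : Type*) [Fintype V] [DecidableEq V] : LinearOrder V :=
  LinearOrder.lift' (fun v => (Fintype.equivFin V v : ℕ))
    (fun a b h => (Fintype.equivFin V).injective (Fin.val_injective h))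

/-- Delete all edges at `v`. -/
def delAt (G : SimpleGraph V) (v : V) : SimpleGraph V where
  Adj a b := G.Adj a b ∧ a ≠ v ∧ b ≠ v
  symm := ⟨by rintro a b ⟨h, ha, hb⟩; exact ⟨h.symm, hb, ha⟩⟩
  loopless := ⟨by rintro a ⟨h, _, _⟩; exact G.loopless.irrefl a h⟩

instance (G : SimpleGraph V) [DecidableRel G.Adj] (v : V) : DecidableRel (delAt G v).Adj :=
  fun _ _ => by unfold delAt; simp only; infer_instance

lemma delAt_adj {G : SimpleGraph V} {v a b : V} :
    (delAt G v).Adj a b ↔ G.Adj a b ∧ a ≠ v ∧ b ≠ v := Iff.rfl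

lemma delAt_nf (G : SimpleGraph V) [DecidableRel G.Adj] {v x : V} (hx : x ≠ v) :
    (delAt G v).neighborFinset x = (G.neighborFinset x).erase v := by
  ext y
  simp only [SimpleGraph.mem_neighborFinset, delAt_adj, mem_erase]
  constructor
  · rintro ⟨h, _, hy⟩; exact ⟨hy, h⟩
  · rintro ⟨hy, h⟩; exact ⟨h, hx, hy⟩

lemma delAt_degree_adj (G : SimpleGraph V) [DecidableRel G.Adj] {v x : V} (hx : G.Adj v x) :
    (delAt G v).degree x = G.degree x - 1 := by
  have hxv : x ≠ v := fun h => G.loopless.irrefl v (h ▸ hx)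
  rw [← SimpleGraph.card_neighborFinset_eq_degree, ← SimpleGraph.card_neighborFinset_eq_degree,
    delAt_nf G hxv, Finset.card_erase_of_mem (by simpa [SimpleGraph.mem_neighborFinset] using hx.symm)]

lemma delAt_degree_nadj (G : SimpleGraph V) [DecidableRel G.Adj] {v x : V} (hxv : x ≠ v)
    (hx : ¬ G.Adj v x) :
    (delAt G v).degree x = G.degree x := by
  rw [← SimpleGraph.card_neighborFinset_eq_degree, ← SimpleGraph.card_neighborFinset_eq_degree,
    delAt_nf G hxv, Finset.erase_eq_of_notMem (by
      simp only [SimpleGraph.mem_neighborFinset]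
      exact fun h => hx h.symm)]

/-- Edge sum as a double vertex sum. -/
lemma two_mul_edge_sum (G : SimpleGraph V) [DecidableRel G.Adj] (f : V → V → ℝ)
    (hf : ∀ u v, f u v = f v u) :
    ∑ x : V, ∑ y : V, (if G.Adj x y then f x y else 0)
      = 2 * ∑ e ∈ G.edgeFinset, Sym2.lift ⟨f, hf⟩ e := by
  have h1 : ∑ x : V, ∑ y : V, (if G.Adj x y then f x y else 0)
      = ∑ p ∈ (univ ×ˢ univ).filter (fun p : V × V => G.Adj p.1 p.2), f p.1 p.2 := by
    rw [sum_filter, Finset.sum_product]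
  rw [h1]
  have hmaps : ∀ p ∈ (univ ×ˢ univ).filter (fun p : V × V => G.Adj p.1 p.2),
      Sym2.mk p.1 p.2 ∈ G.edgeFinset := by
    rintro ⟨a, b⟩ hp
    simp only [mem_filter] at hp
    exact SimpleGraph.mem_edgeFinset.mpr hp.2
  rw [← Finset.sum_fiberwise_of_maps_to hmaps (fun p => f p.1 p.2), Finset.mul_sum]
  refine Finset.sum_congr rfl ?_
  intro e he
  induction e using Sym2.ind with
  | _ a b =>
    have hab : G.Adj a b := by
      rw [SimpleGraph.mem_edgeFinset, SimpleGraph.mem_edgeSet] at he; exact he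
    have hne : a ≠ b := hab.ne
    have hfib : ((univ ×ˢ univ).filter (fun p : V × V => G.Adj p.1 p.2)).filter
        (fun p => Sym2.mk p.1 p.2 = s(a, b)) = {(a, b), (b, a)} := by
      ext ⟨x, y⟩
      simp only [mem_filter, mem_product, mem_univ, true_and, mem_insert, mem_singleton,
        Prod.mk.injEq, Sym2.eq_iff]
      constructor
      · rintro ⟨-, (⟨rfl, rfl⟩ | ⟨rfl, rfl⟩)⟩
        · exact Or.inl ⟨rfl, rfl⟩
        · exact Or.inr ⟨rfl, rfl⟩
      · rintro (⟨rfl, rfl⟩ | ⟨rfl, rfl⟩)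
        · exact ⟨hab, Or.inl ⟨rfl, rfl⟩⟩
        · exact ⟨hab.symm, Or.inr ⟨rfl, rfl⟩⟩
    rw [hfib, Finset.sum_insert (by simp [Prod.mk.injEq, hne]), Finset.sum_singleton]
    rw [Sym2.lift_mk]
    simp only
    rw [hf b a]
    ring

lemma twoR (G : SimpleGraph V) [DecidableRel G.Adj] :
    2 * Rprime G = ∑ x : V, ∑ y : V,
      (if G.Adj x y then 1 / max (G.degree x : ℝ) (G.degree y) else 0) := by
  rw [Rprime, ← two_mul_edge_sum]

lemma adj_deg_pos (G : SimpleGraph V) [DecidableRel G.Adj] {a b : V} (h : G.Adj a b) :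
    0 < G.degree a :=
  (G.degree_pos_iff_exists_adj a).mpr ⟨b, h⟩

/-- Lemma A : `δ + 1 ≤ 2 R'` for `δ` the minimum positive degree. -/
lemma lemA (G : SimpleGraph V) [DecidableRel G.Adj] (v₀ : V) (h₀ : 0 < G.degree v₀)
    (hmin : ∀ u, 0 < G.degree u → G.degree v₀ ≤ G.degree u) :
    (G.degree v₀ : ℝ) + 1 ≤ 2 * Rprime G := by
  classical
  set n := Fintype.card V with hn
  set δ := G.degree v₀ with hδ
  set key : V → ℕ := fun z => n * G.degree z + (Fintype.equivFin V z : ℕ) with hkey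
  have hεlt : ∀ z : V, (Fintype.equivFin V z : ℕ) < n := fun z => (Fintype.equivFin V z).isLt
  have key_mono : ∀ {a b : V}, G.degree a < G.degree b → key a < key b := by
    intro a b h
    simp only [hkey]
    have h1 := hεlt a
    have h2 : n * (G.degree a + 1) ≤ n * G.degree b := Nat.mul_le_mul_left n h
    rw [Nat.mul_succ] at h2
    omega
  have key_inj : Function.Injective key := by
    intro a b hab
    have hd : G.degree a = G.degree b := by
      by_contra hne
      rcases Nat.lt_or_ge (G.degree a) (G.degree b) with h1 | h1
      · have := key_mono h1; omega
      · rcases Nat.lt_or_ge (G.degree b) (G.degree a) with h2 | h2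
        · have := key_mono h2; omega
        · omega
    have hε : (Fintype.equivFin V a : ℕ) = (Fintype.equivFin V b : ℕ) := by
      simp only [hkey] at hab
      rw [hd] at hab
      omega
    exact (Fintype.equivFin V).injective (Fin.val_injective hε)
  have deg_le_of_key_lt : ∀ {a b : V}, key a < key b → G.degree a ≤ G.degree b := by
    intro a b h
    by_contra hc
    push_neg at hc
    have := key_mono hc
    omega
  set W : Finset V := univ.filter (fun z => 0 < G.degree z) with hW
  set m := W.card with hm
  have hv₀W : v₀ ∈ W := by simp only [hW, mem_filter, mem_univ, true_and]; exact h₀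
  have hWm : δ + 1 ≤ m := by
    have hsub : insert v₀ (G.neighborFinset v₀) ⊆ W := by
      intro z hz
      rcases Finset.mem_insert.mp hz with rfl | hz
      · exact hv₀W
      · simp only [SimpleGraph.mem_neighborFinset] at hz
        simp only [hW, mem_filter, mem_univ, true_and]
        exact adj_deg_pos G hz.symm
    have hcard : (insert v₀ (G.neighborFinset v₀)).card = δ + 1 := by
      rw [Finset.card_insert_of_notMem (SimpleGraph.notMem_neighborFinset_self G v₀),
        SimpleGraph.card_neighborFinset_eq_degree]
    calc δ + 1 = _ := hcard.symm
      _ ≤ m := Finset.card_le_card hsub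
  set a : V → ℕ := fun z => (W.filter (fun u => key z < key u)).card with ha
  have a_lt : ∀ {z u : V}, z ∈ W → u ∈ W → key u < key z → a z < a u := by
    intro z u hzW huW hk
    simp only [ha]
    apply Finset.card_lt_card
    constructor
    · intro w hw
      simp only [mem_filter] at hw ⊢
      exact ⟨hw.1, lt_trans hk hw.2⟩
    · intro hsub
      have hz : z ∈ W.filter (fun w => key u < key w) := by
        simp only [mem_filter]; exact ⟨hzW, hk⟩
      have := hsub hz
      simp only [mem_filter] at this
      omega
  have a_injOn : ∀ z ∈ W, ∀ u ∈ W, a z = a u → z = u := by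
    intro z hz u hu hau
    by_contra hne
    have hk : key z ≠ key u := fun h => hne (key_inj h)
    rcases Nat.lt_or_ge (key z) (key u) with h1 | h1
    · have := a_lt hu hz h1; omega
    · have h2 : key u < key z := by omega
      have := a_lt hz hu h2; omega
  have a_le : ∀ z ∈ W, a z < m := by
    intro z hz
    have hsub : W.filter (fun u => key z < key u) ⊆ W.erase z := by
      intro u hu
      simp only [mem_filter] at hu
      refine Finset.mem_erase.mpr ⟨?_, hu.1⟩
      intro h
      subst h
      exact lt_irrefl _ hu.2
    have h1 := Finset.card_le_card hsub
    have hz' : (W.erase z).card = m - 1 := by rw [Finset.card_erase_of_mem hz]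
    have hm1 : 1 ≤ m := Finset.card_pos.mpr ⟨v₀, hv₀W⟩
    simp only [ha]
    omega
  have a_image : W.image a = range m := by
    apply Finset.eq_of_subset_of_card_le
    · intro j hj
      obtain ⟨z, hz, rfl⟩ := Finset.mem_image.mp hj
      exact Finset.mem_range.mpr (a_le z hz)
    · rw [Finset.card_range, Finset.card_image_of_injOn
        (fun z hz u hu h => a_injOn z (by simpa using hz) u (by simpa using hu) h)]
  set c : V → ℕ := fun y => ((G.neighborFinset y).filter (fun x => key x < key y)).card with hc
  have csplit : ∀ y : V, G.degree y ≤ c y + a y := by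
    intro y
    have h1 : c y + ((G.neighborFinset y).filter (fun x => ¬ key x < key y)).card
        = G.degree y := by
      simp only [hc]
      rw [← SimpleGraph.card_neighborFinset_eq_degree]
      exact Finset.card_filter_add_card_filter_not _
    have h2 : (G.neighborFinset y).filter (fun x => ¬ key x < key y) ⊆
        W.filter (fun u => key y < key u) := by
      intro x hx
      simp only [mem_filter, SimpleGraph.mem_neighborFinset] at hx
      obtain ⟨hadj, hnlt⟩ := hx
      have hxy : key x ≠ key y := fun h => hadj.ne' (key_inj h)
      simp only [hW, mem_filter, mem_univ, true_and]
      exact ⟨adj_deg_pos G hadj.symm, by omega⟩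
    have h3 := Finset.card_le_card h2
    simp only [ha]
    omega
  have hpoint : ∀ x y : V,
      (if G.Adj x y then 1 / max (G.degree x : ℝ) (G.degree y) else 0)
      = (if G.Adj x y ∧ key x < key y then 1 / (G.degree y : ℝ) else 0)
      + (if G.Adj x y ∧ key y < key x then 1 / (G.degree x : ℝ) else 0) := by
    intro x y
    by_cases hxy : G.Adj x y
    · have hne : key x ≠ key y := fun h => hxy.ne (key_inj h)
      rcases Nat.lt_or_ge (key x) (key y) with h1 | h1
      · have hd : (G.degree x : ℝ) ≤ (G.degree y : ℝ) := by
          exact_mod_cast deg_le_of_key_lt h1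
        rw [if_pos hxy, if_pos ⟨hxy, h1⟩, if_neg (fun h => absurd h.2 (by omega)),
          max_eq_right hd]
        ring
      · have h2 : key y < key x := by omega
        have hd : (G.degree y : ℝ) ≤ (G.degree x : ℝ) := by
          exact_mod_cast deg_le_of_key_lt h2
        rw [if_pos hxy, if_neg (fun h => absurd h.2 (by omega)), if_pos ⟨hxy, h2⟩,
          max_eq_left hd]
        ring
    · simp [hxy]
  have hsum : 2 * Rprime G = 2 * ∑ y : V, (c y : ℝ) / (G.degree y : ℝ) := by
    rw [twoR]
    have hsplit : ∑ x : V, ∑ y : V,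
        (if G.Adj x y then 1 / max (G.degree x : ℝ) (G.degree y) else 0)
        = (∑ x : V, ∑ y : V, (if G.Adj x y ∧ key x < key y then 1 / (G.degree y : ℝ) else 0))
        + (∑ x : V, ∑ y : V, (if G.Adj x y ∧ key y < key x then 1 / (G.degree x : ℝ) else 0)) := by
      rw [← Finset.sum_add_distrib]
      refine Finset.sum_congr rfl fun x _ => ?_
      rw [← Finset.sum_add_distrib]
      exact Finset.sum_congr rfl fun y _ => hpoint x y
    rw [hsplit]
    have hA : ∑ x : V, ∑ y : V, (if G.Adj x y ∧ key x < key y then 1 / (G.degree y : ℝ) else 0)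
        = ∑ y : V, (c y : ℝ) / (G.degree y : ℝ) := by
      rw [Finset.sum_comm]
      refine Finset.sum_congr rfl fun y _ => ?_
      rw [← Finset.sum_filter, Finset.sum_const]
      have hfe : univ.filter (fun x => G.Adj x y ∧ key x < key y)
          = (G.neighborFinset y).filter (fun x => key x < key y) := by
        ext x
        simp only [mem_filter, mem_univ, true_and, SimpleGraph.mem_neighborFinset]
        constructor
        · rintro ⟨h1, h2⟩; exact ⟨h1.symm, h2⟩
        · rintro ⟨h1, h2⟩; exact ⟨h1.symm, h2⟩
      rw [hfe, nsmul_eq_mul]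
      simp only [hc]
      rw [mul_one_div]
    have hB : ∑ x : V, ∑ y : V, (if G.Adj x y ∧ key y < key x then 1 / (G.degree x : ℝ) else 0)
        = ∑ x : V, (c x : ℝ) / (G.degree x : ℝ) := by
      refine Finset.sum_congr rfl fun x _ => ?_
      rw [← Finset.sum_filter, Finset.sum_const]
      have hfe : univ.filter (fun y => G.Adj x y ∧ key y < key x)
          = (G.neighborFinset x).filter (fun y => key y < key x) := by
        ext y
        simp only [mem_filter, mem_univ, true_and, SimpleGraph.mem_neighborFinset]
      rw [hfe, nsmul_eq_mul]
      simp only [hc]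
      rw [mul_one_div]
    rw [hA, hB]
    ring
  set T : Finset V := W.filter (fun z => a z ≤ δ) with hT
  have h1 : ∑ y ∈ T, (c y : ℝ) / (G.degree y : ℝ) ≤ ∑ y : V, (c y : ℝ) / (G.degree y : ℝ) :=
    Finset.sum_le_sum_of_subset_of_nonneg (Finset.subset_univ T)
      (fun y _ _ => div_nonneg (Nat.cast_nonneg _) (Nat.cast_nonneg _))
  have hTimage : T.image a = range (δ + 1) := by
    ext j
    simp only [mem_image, mem_range, hT, mem_filter]
    constructor
    · rintro ⟨z, ⟨hzW, hza⟩, rfl⟩; omega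
    · intro hj
      have hjm : j ∈ range m := Finset.mem_range.mpr (by omega)
      rw [← a_image] at hjm
      obtain ⟨z, hzW, rfl⟩ := Finset.mem_image.mp hjm
      exact ⟨z, ⟨hzW, by omega⟩, rfl⟩
  have hδpos : (0:ℝ) < (δ : ℝ) := by exact_mod_cast h₀
  have h2 : ∑ j ∈ range (δ + 1), (1 - (j : ℝ) / (δ:ℝ)) = ∑ y ∈ T, (1 - (a y : ℝ) / (δ:ℝ)) := by
    rw [← hTimage, Finset.sum_image]
    intro z hz u hu h
    simp only [hT, Finset.coe_filter, Set.mem_setOf_eq, Finset.mem_coe, mem_filter] at hz hu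
    exact a_injOn z hz.1 u hu.1 h
  have h3 : ∀ y ∈ T, (1 - (a y : ℝ) / (δ:ℝ)) ≤ (c y : ℝ) / (G.degree y : ℝ) := by
    intro y hy
    simp only [hT, mem_filter] at hy
    obtain ⟨hyW, hya⟩ := hy
    simp only [hW, mem_filter, mem_univ, true_and] at hyW
    have hdpos : (0:ℝ) < (G.degree y : ℝ) := by exact_mod_cast hyW
    have hδd : (δ:ℝ) ≤ (G.degree y : ℝ) := by exact_mod_cast hmin y hyW
    have hcy : (G.degree y : ℝ) - (a y : ℝ) ≤ (c y : ℝ) := by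
      have hcs := csplit y
      have : (G.degree y : ℝ) ≤ (c y : ℝ) + (a y : ℝ) := by exact_mod_cast hcs
      linarith
    have step1 : (a y : ℝ) / (G.degree y:ℝ) ≤ (a y : ℝ) / (δ:ℝ) := by
      gcongr
    calc 1 - (a y:ℝ)/(δ:ℝ) ≤ 1 - (a y:ℝ)/(G.degree y:ℝ) := by linarith
      _ = ((G.degree y:ℝ) - (a y:ℝ))/(G.degree y:ℝ) := by field_simp
      _ ≤ (c y:ℝ)/(G.degree y:ℝ) := by gcongr
  have h4 : ∑ j ∈ range (δ + 1), (1 - (j : ℝ) / (δ:ℝ)) = ((δ:ℝ) + 1) / 2 := by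
    rw [Finset.sum_sub_distrib, Finset.sum_const, Finset.card_range]
    have hg : ∑ j ∈ range (δ + 1), (j : ℝ) = (δ:ℝ) * ((δ:ℝ)+1) / 2 := by
      have hgauss : (∑ i ∈ range (δ + 1), i) * 2 = (δ + 1) * δ := by
        simpa using Finset.sum_range_id_mul_two (δ + 1)
      have h5 : (∑ j ∈ range (δ + 1), (j:ℝ)) * 2 = ((δ:ℝ) + 1) * (δ:ℝ) := by
        rw [← Nat.cast_sum]
        exact_mod_cast congrArg (Nat.cast : ℕ → ℝ) hgauss
      linarith
    rw [← Finset.sum_div, hg]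
    field_simp
    ring
  have hfin := Finset.sum_le_sum h3
  calc (δ:ℝ) + 1 = 2 * (((δ:ℝ)+1)/2) := by ring
    _ = 2 * ∑ j ∈ range (δ+1), (1 - (j:ℝ)/(δ:ℝ)) := by rw [h4]
    _ = 2 * ∑ y ∈ T, (1 - (a y:ℝ)/(δ:ℝ)) := by rw [h2]
    _ ≤ 2 * ∑ y ∈ T, (c y:ℝ)/(G.degree y:ℝ) := by linarith
    _ ≤ 2 * ∑ y : V, (c y:ℝ)/(G.degree y:ℝ) := by linarith
    _ = 2 * Rprime G := hsum.symm

lemma ra1 (a b : ℝ) (ha : 2 ≤ a) (hb : 1 ≤ b) :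
    1 / max (a - 1) b ≤ 1 / max a b + 1 / ((a - 1) * a) := by
  have hpa : (0:ℝ) < (a - 1) * a := by nlinarith
  rcases le_total a b with h | h
  · rw [max_eq_right h, max_eq_right (by linarith : a - 1 ≤ b)]
    have : (0:ℝ) < 1 / ((a - 1) * a) := one_div_pos.mpr hpa
    linarith
  · rw [max_eq_left h]
    have h1 : 1 / max (a - 1) b ≤ 1 / (a - 1) :=
      one_div_le_one_div_of_le (by linarith) (le_max_left _ _)
    have h2 : 1 / (a - 1) = 1 / a + 1 / ((a - 1) * a) := by
      have hne1 : a - 1 ≠ 0 := by linarith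
      have hne0 : a ≠ 0 := by linarith
      field_simp
      ring
    linarith

lemma ra2 (a b : ℝ) (ha : 2 ≤ a) (hb : 2 ≤ b) :
    1 / max (a - 1) (b - 1) ≤ 1 / max a b + (1 / ((a - 1) * a) + 1 / ((b - 1) * b)) := by
  have hpa : (0:ℝ) < (a - 1) * a := by nlinarith
  have hpb : (0:ℝ) < (b - 1) * b := by nlinarith
  rcases le_total a b with h | h
  · rw [max_eq_right h, max_eq_right (by linarith : a - 1 ≤ b - 1)]
    have h2 : 1 / (b - 1) = 1 / b + 1 / ((b - 1) * b) := by
      have hne1 : b - 1 ≠ 0 := by linarith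
      have hne0 : b ≠ 0 := by linarith
      field_simp
      ring
    have : (0:ℝ) < 1 / ((a - 1) * a) := one_div_pos.mpr hpa
    linarith
  · rw [max_eq_left h, max_eq_left (by linarith : b - 1 ≤ a - 1)]
    have h2 : 1 / (a - 1) = 1 / a + 1 / ((a - 1) * a) := by
      have hne1 : a - 1 ≠ 0 := by linarith
      have hne0 : a ≠ 0 := by linarith
      field_simp
      ring
    have : (0:ℝ) < 1 / ((b - 1) * b) := one_div_pos.mpr hpb
    linarith

/-- Lemma B : deleting all edges at a vertex of minimum positive degree does not
increase the modified Randić index. -/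
lemma lemB (G : SimpleGraph V) [DecidableRel G.Adj] (v : V)
    (hmin : ∀ u, 0 < G.degree u → G.degree v ≤ G.degree u) :
    Rprime (delAt G v) ≤ Rprime G := by
  classical
  set g : V → ℝ := fun z =>
    if G.Adj v z then 1 / (((G.degree z : ℝ) - 1) * (G.degree z : ℝ)) else 0 with hg
  have hdeg' : ∀ x : V, G.Adj v x → (((delAt G v).degree x : ℝ)) = (G.degree x : ℝ) - 1 := by
    intro x hx
    have h1 : 1 ≤ G.degree x := adj_deg_pos G hx.symm
    rw [delAt_degree_adj G hx, Nat.cast_sub h1, Nat.cast_one]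
  have hdeg'' : ∀ x : V, x ≠ v → ¬ G.Adj v x → ((delAt G v).degree x : ℝ) = (G.degree x : ℝ) := by
    intro x hxv hx
    rw [delAt_degree_nadj G hxv hx]
  have two_le : ∀ {x y : V}, G.Adj x y → y ≠ v → G.Adj v x → 2 ≤ G.degree x := by
    intro x y hxy hyv hvx
    have hsub : ({y, v} : Finset V) ⊆ G.neighborFinset x := by
      intro z hz
      rcases Finset.mem_insert.mp hz with rfl | hz
      · simpa [SimpleGraph.mem_neighborFinset] using hxy
      · rw [Finset.mem_singleton] at hz
        subst hz
        simpa [SimpleGraph.mem_neighborFinset] using hvx.symm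
    have hcard : ({y, v} : Finset V).card = 2 := Finset.card_pair hyv
    calc 2 = _ := hcard.symm
      _ ≤ (G.neighborFinset x).card := Finset.card_le_card hsub
      _ = G.degree x := G.card_neighborFinset_eq_degree x
  have pair_bound : ∀ x y : V, (delAt G v).Adj x y →
      1 / max ((delAt G v).degree x : ℝ) ((delAt G v).degree y : ℝ)
        ≤ 1 / max (G.degree x : ℝ) (G.degree y : ℝ) + (g x + g y) := by
    intro x y hxy'
    obtain ⟨hadj, hxv, hyv⟩ := (delAt_adj (G := G) (v := v)).mp hxy'
    have hdx : 0 < G.degree x := adj_deg_pos G hadj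
    have hdy : 0 < G.degree y := adj_deg_pos G hadj.symm
    by_cases hx : G.Adj v x <;> by_cases hy : G.Adj v y
    · have h2x : 2 ≤ G.degree x := two_le hadj hyv hx
      have h2y : 2 ≤ G.degree y := two_le hadj.symm hxv hy
      rw [hdeg' x hx, hdeg' y hy]
      simp only [hg, if_pos hx, if_pos hy]
      exact ra2 _ _ (by exact_mod_cast h2x) (by exact_mod_cast h2y)
    · have h2x : 2 ≤ G.degree x := two_le hadj hyv hx
      rw [hdeg' x hx, hdeg'' y hyv hy]
      simp only [hg, if_pos hx, if_neg hy]
      have := ra1 (G.degree x : ℝ) (G.degree y : ℝ) (by exact_mod_cast h2x)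
        (by exact_mod_cast hdy)
      linarith
    · have h2y : 2 ≤ G.degree y := two_le hadj.symm hxv hy
      rw [hdeg'' x hxv hx, hdeg' y hy]
      simp only [hg, if_neg hx, if_pos hy]
      have := ra1 (G.degree y : ℝ) (G.degree x : ℝ) (by exact_mod_cast h2y)
        (by exact_mod_cast hdx)
      rw [max_comm ((G.degree x : ℝ)) ((G.degree y : ℝ) - 1),
        max_comm ((G.degree x : ℝ)) ((G.degree y : ℝ))]
      linarith
    · rw [hdeg'' x hxv hx, hdeg'' y hyv hy]
      simp only [hg, if_neg hx, if_neg hy]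
      norm_num
  have hsplit : ∀ x y : V,
      (if G.Adj x y then 1 / max (G.degree x : ℝ) (G.degree y) else 0)
      = (if (delAt G v).Adj x y then 1 / max (G.degree x : ℝ) (G.degree y) else 0)
      + (if G.Adj x y ∧ (x = v ∨ y = v) then 1 / max (G.degree x : ℝ) (G.degree y) else 0) := by
    intro x y
    by_cases hadj : G.Adj x y
    · by_cases hxy : x = v ∨ y = v
      · have hG'n : ¬ (delAt G v).Adj x y := fun h => by
          rcases hxy with rfl | rfl
          · exact ((delAt_adj (G := G) (v := x)).mp h).2.1 rfl
          · exact ((delAt_adj (G := G) (v := y)).mp h).2.2 rfl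
        rw [if_pos hadj, if_neg hG'n, if_pos ⟨hadj, hxy⟩]
        ring
      · push_neg at hxy
        have hG'y : (delAt G v).Adj x y := (delAt_adj).mpr ⟨hadj, hxy.1, hxy.2⟩
        rw [if_pos hadj, if_pos hG'y, if_neg (fun h => by
          rcases h.2 with rfl | rfl
          · exact hxy.1 rfl
          · exact hxy.2 rfl)]
        ring
    · have hG'n : ¬ (delAt G v).Adj x y := fun h => hadj ((delAt_adj).mp h).1
      rw [if_neg hadj, if_neg hG'n, if_neg (fun h => hadj h.1)]
      ring
  have sum_split :
      (∑ x : V, ∑ y : V, (if G.Adj x y then 1 / max (G.degree x : ℝ) (G.degree y) else 0))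
      = (∑ x : V, ∑ y : V, (if (delAt G v).Adj x y then 1 / max (G.degree x : ℝ) (G.degree y) else 0))
      + (∑ x : V, ∑ y : V, (if G.Adj x y ∧ (x = v ∨ y = v)
          then 1 / max (G.degree x : ℝ) (G.degree y) else 0)) := by
    rw [← Finset.sum_add_distrib]
    refine Finset.sum_congr rfl fun x _ => ?_
    rw [← Finset.sum_add_distrib]
    exact Finset.sum_congr rfl fun y _ => hsplit x y
  have gain : (∑ x : V, ∑ y : V,
        (if (delAt G v).Adj x y then 1 / max ((delAt G v).degree x : ℝ) ((delAt G v).degree y) else 0))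
      ≤ (∑ x : V, ∑ y : V, (if (delAt G v).Adj x y then 1 / max (G.degree x : ℝ) (G.degree y) else 0))
      + ((∑ x : V, ∑ y : V, (if (delAt G v).Adj x y then g x else 0))
        + (∑ x : V, ∑ y : V, (if (delAt G v).Adj x y then g y else 0))) := by
    have hterm : ∀ x y : V,
        (if (delAt G v).Adj x y then 1 / max ((delAt G v).degree x : ℝ) ((delAt G v).degree y) else 0)
        ≤ (if (delAt G v).Adj x y then 1 / max (G.degree x : ℝ) (G.degree y) else 0)
        + ((if (delAt G v).Adj x y then g x else 0) + (if (delAt G v).Adj x y then g y else 0)) := by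
      intro x y
      by_cases h : (delAt G v).Adj x y
      · simp only [if_pos h]
        exact pair_bound x y h
      · simp only [if_neg h]
        norm_num
    calc (∑ x : V, ∑ y : V, (if (delAt G v).Adj x y then 1 / max ((delAt G v).degree x : ℝ) ((delAt G v).degree y) else 0))
        ≤ ∑ x : V, ∑ y : V,
          ((if (delAt G v).Adj x y then 1 / max (G.degree x : ℝ) (G.degree y) else 0)
          + ((if (delAt G v).Adj x y then g x else 0) + (if (delAt G v).Adj x y then g y else 0))) :=
        Finset.sum_le_sum (fun x _ => Finset.sum_le_sum (fun y _ => hterm x y))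
      _ = _ := by simp only [Finset.sum_add_distrib]
  have csum1 : (∑ x : V, ∑ y : V, (if (delAt G v).Adj x y then g x else 0))
      = ∑ x : V, g x * ((delAt G v).degree x : ℝ) := by
    refine Finset.sum_congr rfl fun x _ => ?_
    rw [← Finset.sum_filter, Finset.sum_const, ← SimpleGraph.neighborFinset_eq_filter,
      SimpleGraph.card_neighborFinset_eq_degree, nsmul_eq_mul, mul_comm]
  have csum2 : (∑ x : V, ∑ y : V, (if (delAt G v).Adj x y then g y else 0))
      = ∑ x : V, g x * ((delAt G v).degree x : ℝ) := by
    rw [Finset.sum_comm]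
    refine Finset.sum_congr rfl fun y _ => ?_
    have hcomm : ∀ x : V, (if (delAt G v).Adj x y then g y else 0) = (if (delAt G v).Adj y x then g y else 0) := by
      intro x
      have h : (delAt G v).Adj x y = (delAt G v).Adj y x := propext ⟨fun h => h.symm, fun h => h.symm⟩
      simp only [h]
    rw [Finset.sum_congr rfl (fun x _ => hcomm x)]
    rw [← Finset.sum_filter, Finset.sum_const, ← SimpleGraph.neighborFinset_eq_filter,
      SimpleGraph.card_neighborFinset_eq_degree, nsmul_eq_mul, mul_comm]
  have csum_le : ∑ x : V, g x * ((delAt G v).degree x : ℝ)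
      ≤ ∑ x : V, (if G.Adj v x then 1 / (G.degree x : ℝ) else 0) := by
    refine Finset.sum_le_sum fun x _ => ?_
    by_cases hx : G.Adj v x
    · have hd1 : 1 ≤ G.degree x := adj_deg_pos G hx.symm
      rw [if_pos hx, hdeg' x hx]
      simp only [hg, if_pos hx]
      rcases Nat.lt_or_ge (G.degree x) 2 with h2 | h2
      · have hone : (G.degree x : ℝ) = 1 := by exact_mod_cast (by omega : G.degree x = 1)
        rw [hone]
        norm_num
      · have h2' : (2:ℝ) ≤ (G.degree x : ℝ) := by exact_mod_cast h2
        have heq : 1 / (((G.degree x : ℝ) - 1) * (G.degree x : ℝ)) * ((G.degree x : ℝ) - 1)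
            = 1 / (G.degree x : ℝ) := by
          have hne1 : (G.degree x : ℝ) - 1 ≠ 0 := by linarith
          have hne0 : (G.degree x : ℝ) ≠ 0 := by linarith
          field_simp
        rw [heq]
    · simp only [hg, if_neg hx]
      norm_num
  have loss : (∑ x : V, ∑ y : V, (if G.Adj x y ∧ (x = v ∨ y = v)
        then 1 / max (G.degree x : ℝ) (G.degree y) else 0))
      = 2 * ∑ x : V, (if G.Adj v x then 1 / (G.degree x : ℝ) else 0) := by
    have hFv : ∀ z : V, G.Adj v z →
        1 / max ((G.degree v : ℝ)) (G.degree z : ℝ) = 1 / (G.degree z : ℝ) := by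
      intro z hz
      rw [max_eq_right]
      exact_mod_cast hmin z (adj_deg_pos G hz.symm)
    have hpt : ∀ x y : V, (if G.Adj x y ∧ (x = v ∨ y = v)
          then 1 / max (G.degree x : ℝ) (G.degree y) else 0)
        = (if x = v then (if G.Adj v y then 1 / (G.degree y : ℝ) else 0) else 0)
        + (if y = v then (if G.Adj v x then 1 / (G.degree x : ℝ) else 0) else 0) := by
      intro x y
      by_cases hx : x = v <;> by_cases hy : y = v
      · rw [hx, hy]
        simp [G.loopless.irrefl v]
      · rw [hx]
        by_cases hadj : G.Adj v y
        · rw [if_pos ⟨hadj, Or.inl rfl⟩, if_pos rfl, if_pos hadj, if_neg hy, hFv y hadj]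
          ring
        · rw [if_neg (fun h => hadj h.1), if_pos rfl, if_neg hadj, if_neg hy]
          ring
      · rw [hy]
        by_cases hadj : G.Adj v x
        · have hadj' : G.Adj x v := hadj.symm
          rw [if_pos ⟨hadj', Or.inr rfl⟩, if_neg hx, if_pos rfl, if_pos hadj, max_comm,
            hFv x hadj]
          ring
        · rw [if_neg (fun h => hadj h.1.symm), if_neg hx, if_pos rfl, if_neg hadj]
          ring
      · rw [if_neg (fun h => by
            rcases h.2 with h' | h'
            · exact hx h'
            · exact hy h'), if_neg hx, if_neg hy]
        ring
    have hstep : (∑ x : V, ∑ y : V, (if G.Adj x y ∧ (x = v ∨ y = v)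
          then 1 / max (G.degree x : ℝ) (G.degree y) else 0))
        = (∑ x : V, ∑ y : V,
            (if x = v then (if G.Adj v y then 1 / (G.degree y : ℝ) else 0) else 0))
        + (∑ x : V, ∑ y : V,
            (if y = v then (if G.Adj v x then 1 / (G.degree x : ℝ) else 0) else 0)) := by
      rw [← Finset.sum_add_distrib]
      refine Finset.sum_congr rfl fun x _ => ?_
      rw [← Finset.sum_add_distrib]
      exact Finset.sum_congr rfl fun y _ => hpt x y
    rw [hstep]
    have hP1 : (∑ x : V, ∑ y : V,
          (if x = v then (if G.Adj v y then 1 / (G.degree y : ℝ) else 0) else 0))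
        = ∑ y : V, (if G.Adj v y then 1 / (G.degree y : ℝ) else 0) := by
      have : ∀ x : V, (∑ y : V, (if x = v then (if G.Adj v y then 1 / (G.degree y : ℝ) else 0) else 0))
          = (if x = v then (∑ y : V, (if G.Adj v y then 1 / (G.degree y : ℝ) else 0)) else 0) := by
        intro x
        split
        · rfl
        · simp
      rw [Finset.sum_congr rfl (fun x _ => this x), Finset.sum_ite_eq' univ v]
      simp
    have hP2 : (∑ x : V, ∑ y : V,
          (if y = v then (if G.Adj v x then 1 / (G.degree x : ℝ) else 0) else 0))
        = ∑ x : V, (if G.Adj v x then 1 / (G.degree x : ℝ) else 0) := by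
      refine Finset.sum_congr rfl fun x _ => ?_
      rw [Finset.sum_ite_eq' univ v]
      simp
    rw [hP1, hP2]
    ring
  have main : (∑ x : V, ∑ y : V,
        (if (delAt G v).Adj x y then 1 / max ((delAt G v).degree x : ℝ) ((delAt G v).degree y) else 0))
      ≤ (∑ x : V, ∑ y : V, (if G.Adj x y then 1 / max (G.degree x : ℝ) (G.degree y) else 0)) := by
    have h1 := gain
    rw [csum1, csum2] at h1
    have h2 : (∑ x : V, ∑ y : V, (if (delAt G v).Adj x y then 1 / max (G.degree x : ℝ) (G.degree y) else 0))
        + (∑ x : V, g x * ((delAt G v).degree x : ℝ) + ∑ x : V, g x * ((delAt G v).degree x : ℝ))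
        ≤ (∑ x : V, ∑ y : V, (if (delAt G v).Adj x y then 1 / max (G.degree x : ℝ) (G.degree y) else 0))
        + 2 * ∑ x : V, (if G.Adj v x then 1 / (G.degree x : ℝ) else 0) := by
      linarith
    rw [← loss] at h2
    rw [← sum_split] at h2
    linarith
  have e1 := twoR G
  have e2 := twoR (delAt G v)
  rw [← e1, ← e2] at main
  linarith

lemma colSet_mem_card (G : SimpleGraph V) :
    Fintype.card V + 1 ∈ {k | ∃ L : LinearOrder V, ∀ v, {u | G.Adj u v ∧ L.lt u v}.ncard < k} := by
  refine ⟨ord0 V, fun v => ?_⟩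
  have h1 : {u | G.Adj u v ∧ (ord0 V).lt u v}.ncard ≤ (Set.univ : Set V).ncard :=
    Set.ncard_le_ncard (Set.subset_univ _) Set.finite_univ
  rw [Set.ncard_univ, Nat.card_eq_fintype_card] at h1
  omega

/-- Lemma C : coloring number bound via edge deletion at a vertex. -/
lemma lemC (G : SimpleGraph V) [DecidableRel G.Adj] (v : V) :
    coloringNumber G ≤ max (coloringNumber (delAt G v)) (G.degree v + 1) := by
  classical
  set G' := delAt G v with hG'
  have hne : {k | ∃ L : LinearOrder V, ∀ u, {w | (delAt G v).Adj w u ∧ L.lt w u}.ncard < k}.Nonempty :=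
    ⟨_, colSet_mem_card G'⟩
  obtain ⟨L', hL'⟩ := Nat.sInf_mem hne
  letI := L'
  set r : V → ℕ := fun u => (univ.filter (fun w => w ≤ u)).card with hr
  have rmono : ∀ {a b : V}, a < b → r a < r b := by
    intro a b hab
    apply Finset.card_lt_card
    constructor
    · intro w hw
      simp only [mem_filter, mem_univ, true_and] at hw ⊢
      exact le_trans hw hab.le
    · intro hsub
      have hb : b ∈ univ.filter (fun w => w ≤ b) := by simp
      have := hsub hb
      simp only [mem_filter, mem_univ, true_and] at this
      exact absurd this (not_le.mpr hab)
  have rlt : ∀ {a b : V}, r a < r b → a < b := by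
    intro a b h
    rcases lt_trichotomy a b with h1 | h1 | h1
    · exact h1
    · subst h1; omega
    · exact absurd (rmono h1) (by omega)
  have rle : ∀ u, r u ≤ Fintype.card V := fun u => by
    simpa using Finset.card_le_card (Finset.subset_univ (univ.filter (fun w => w ≤ u)))
  set n := Fintype.card V with hn
  set f : V → ℕ := fun u => if u = v then n + 1 else r u with hf
  have finj : Function.Injective f := by
    intro a b hab
    simp only [hf] at hab
    by_cases ha : a = v <;> by_cases hb : b = v
    · rw [ha, hb]
    · rw [if_pos ha, if_neg hb] at hab; exact absurd hab.symm (by have := rle b; omega)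
    · rw [if_neg ha, if_pos hb] at hab; exact absurd hab (by have := rle a; omega)
    · rw [if_neg ha, if_neg hb] at hab
      by_contra hne2
      rcases lt_trichotomy a b with h1 | h1 | h1
      · exact absurd (rmono h1) (by omega)
      · exact hne2 h1
      · exact absurd (rmono h1) (by omega)
  set L : LinearOrder V := LinearOrder.lift' f finj with hL
  have hlt : ∀ a b : V, L.lt a b ↔ f a < f b := fun a b => Iff.rfl
  refine Nat.sInf_le ⟨L, fun u => ?_⟩
  by_cases hu : u = v
  · subst hu
    have hsub : {w | G.Adj w u ∧ L.lt w u} ⊆ (G.neighborFinset u : Set V) := by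
      rintro w ⟨hadj, -⟩
      simp only [Finset.mem_coe, SimpleGraph.mem_neighborFinset]
      exact hadj.symm
    have h1 : {w | G.Adj w u ∧ L.lt w u}.ncard ≤ G.degree u := by
      have := Set.ncard_le_ncard hsub (Set.toFinite _)
      rwa [Set.ncard_coe_finset, SimpleGraph.card_neighborFinset_eq_degree] at this
    have h2 : G.degree u < G.degree u + 1 := Nat.lt_succ_self _
    exact lt_of_le_of_lt h1 (lt_of_lt_of_le h2 (le_max_right _ _))
  · have hsub : {w | G.Adj w u ∧ L.lt w u} ⊆ {w | (delAt G v).Adj w u ∧ L'.lt w u} := by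
      rintro w ⟨hadj, hwlt⟩
      rw [hlt] at hwlt
      have hfu : f u = r u := if_neg hu
      have hw : w ≠ v := by
        intro hwv
        rw [hfu, hwv] at hwlt
        have hfv : f v = n + 1 := if_pos rfl
        rw [hfv] at hwlt
        have := rle u
        omega
      have hrw : r w < r u := by
        rw [hfu] at hwlt
        simpa only [hf, if_neg hw] using hwlt
      exact ⟨⟨hadj, hw, hu⟩, rlt hrw⟩
    have h1 := Set.ncard_le_ncard hsub (Set.toFinite _)
    exact lt_of_le_of_lt h1 (lt_of_lt_of_le (hL' u) (le_max_left _ _))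

lemma edgeFinset_empty_of_no_pos (G : SimpleGraph V) [DecidableRel G.Adj]
    (h : ∀ u : V, ¬ 0 < G.degree u) : G.edgeFinset = ∅ := by
  rw [Finset.eq_empty_iff_forall_notMem]
  intro e he
  induction e using Sym2.ind with
  | _ a b =>
    rw [SimpleGraph.mem_edgeFinset, SimpleGraph.mem_edgeSet] at he
    exact h a (adj_deg_pos G he)

lemma col_le_one (G : SimpleGraph V) [DecidableRel G.Adj] (hE : G.edgeFinset = ∅) :
    coloringNumber G ≤ 1 := by
  apply Nat.sInf_le
  refine ⟨ord0 V, fun u => ?_⟩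
  have hset : {w | G.Adj w u ∧ (ord0 V).lt w u} = ∅ := by
    ext w
    simp only [Set.mem_setOf_eq, Set.mem_empty_iff_false, iff_false, not_and]
    intro hadj
    have hmem : s(w, u) ∈ G.edgeFinset := SimpleGraph.mem_edgeFinset.mpr hadj
    rw [hE] at hmem
    exact absurd hmem (Finset.notMem_empty _)
  rw [hset, Set.ncard_empty]
  norm_num

lemma aux_main (N : ℕ) : ∀ (G : SimpleGraph V) [DecidableRel G.Adj],
    G.edgeFinset.card ≤ N → (coloringNumber G : ℝ) ≤ max 1 (2 * Rprime G) := by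
  induction N with
  | zero =>
    intro G inst hcard
    letI := inst
    have hE : G.edgeFinset = ∅ := Finset.card_eq_zero.mp (Nat.le_zero.mp hcard)
    have h1 : (coloringNumber G : ℝ) ≤ 1 := by exact_mod_cast col_le_one G hE
    exact le_trans h1 (le_max_left _ _)
  | succ n ih =>
    intro G inst hcard
    letI := inst
    by_cases hpos : ∃ u : V, 0 < G.degree u
    · have hWne : (univ.filter (fun z => 0 < G.degree z)).Nonempty := by
        obtain ⟨u, hu⟩ := hpos
        exact ⟨u, by simp [hu]⟩
      obtain ⟨v, hvW, hvmin⟩ := Finset.exists_min_image _ (fun z => G.degree z) hWne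
      simp only [mem_filter, mem_univ, true_and] at hvW
      have hmin : ∀ u, 0 < G.degree u → G.degree v ≤ G.degree u := by
        intro u hu
        exact hvmin u (by simp [hu])
      have hless : (delAt G v).edgeFinset.card < G.edgeFinset.card := by
        apply Finset.card_lt_card
        constructor
        · intro e he
          induction e using Sym2.ind with
          | _ a b =>
            rw [SimpleGraph.mem_edgeFinset, SimpleGraph.mem_edgeSet] at he ⊢
            exact he.1
        · intro hsub
          obtain ⟨u, hu⟩ := (G.degree_pos_iff_exists_adj v).mp hvW
          have h1 : s(v, u) ∈ G.edgeFinset := SimpleGraph.mem_edgeFinset.mpr hu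
          have h2 := hsub h1
          rw [SimpleGraph.mem_edgeFinset, SimpleGraph.mem_edgeSet] at h2
          exact h2.2.1 rfl
      have hcard' : (delAt G v).edgeFinset.card ≤ n := by omega
      have hIH := ih (delAt G v) hcard'
      have hC := lemC G v
      have hB := lemB G v hmin
      have hA := lemA G v hvW hmin
      have hcast : (coloringNumber G : ℝ)
          ≤ max ((coloringNumber (delAt G v) : ℝ)) ((G.degree v : ℝ) + 1) := by
        exact_mod_cast hC
      have hfinal : max ((coloringNumber (delAt G v) : ℝ)) ((G.degree v : ℝ) + 1)
          ≤ max 1 (2 * Rprime G) := by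
        apply max_le
        · exact le_trans hIH (max_le_max le_rfl (by linarith))
        · exact le_trans hA (le_max_right _ _)
      exact le_trans hcast hfinal
    · push_neg at hpos
      have hE : G.edgeFinset = ∅ :=
        edgeFinset_empty_of_no_pos G (fun u => by have := hpos u; omega)
      have h1 : (coloringNumber G : ℝ) ≤ 1 := by exact_mod_cast col_le_one G hE
      exact le_trans h1 (le_max_left _ _)

end ColAux

theorem ColAux.main_col_le_two_rprime (G : SimpleGraph V) [DecidableRel G.Adj]
    (h : ∀ v, 0 < G.degree v) :
    (coloringNumber G : ℝ) ≤ 2 * Rprime G := by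
  classical
  cases isEmpty_or_nonempty V with
  | inl hV =>
    have h0 : coloringNumber G = 0 := by
      have hmem : (0:ℕ) ∈ {k | ∃ L : LinearOrder V, ∀ v, {u | G.Adj u v ∧ L.lt u v}.ncard < k} :=
        ⟨ColAux.ord0 V, fun v => (hV.false v).elim⟩
      exact Nat.le_zero.mp (Nat.sInf_le hmem)
    have hE : G.edgeFinset = ∅ :=
      ColAux.edgeFinset_empty_of_no_pos G (fun u => (hV.false u).elim)
    rw [h0, Rprime, hE, Finset.sum_empty]
    norm_num
  | inr hV =>
    obtain ⟨v₀⟩ := hV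
    obtain ⟨v, -, hvmin⟩ := Finset.exists_min_image univ (fun z => G.degree z) ⟨v₀, mem_univ _⟩
    have hA := ColAux.lemA G v (h v) (fun u _ => hvmin u (mem_univ u))
    have hmax := ColAux.aux_main G.edgeFinset.card G le_rfl
    have h2 : (1:ℝ) ≤ 2 * Rprime G := by
      have hd : (1:ℝ) ≤ (G.degree v : ℝ) := by exact_mod_cast h v
      linarith
    calc (coloringNumber G : ℝ) ≤ max 1 (2 * Rprime G) := hmax
      _ = 2 * Rprime G := max_eq_right h2


theorem col_le_two_rprime (G : SimpleGraph V) [DecidableRel G.Adj]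
    (h : ∀ v, 0 < G.degree v) :
    (coloringNumber G : ℝ) ≤ 2 * Rprime G :=
  ColAux.main_col_le_two_rprime G h
end

section
/- For any graph G without isolated vertices, the chromatic number satisfies χ(G) ≤ 2R'(G), where R'(G) = Σ_{uv∈E} 1/max{d(u),d(v)}. -/
open Finset

variable {V : Type*} [Fintype V] [DecidableEq V]

section ChromAux

variable {V : Type*} [Fintype V] [DecidableEq V]

/-- Greedy coloring along `ℕ` with adjacency `A`. -/
noncomputable def greedyCol (t : ℕ) (ht : 0 < t) (A : ℕ → ℕ → Prop) [DecidableRel A] :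
    ℕ → Fin t
  | i =>
    if h : (Finset.univ \ ((Finset.range i).filter (fun j => A j i)).attach.image
        (fun j => greedyCol t ht A j.1)).Nonempty then h.choose else ⟨0, ht⟩
termination_by i => i
decreasing_by
  all_goals
    have hj := j.2
    simp only [Finset.mem_filter, Finset.mem_range] at hj
    exact hj.1

theorem greedyCol_not_mem (t : ℕ) (ht : 0 < t) (A : ℕ → ℕ → Prop) [DecidableRel A] (i : ℕ)
    (hcard : ((Finset.range i).filter (fun j => A j i)).card < t) :
    greedyCol t ht A i ∉ ((Finset.range i).filter (fun j => A j i)).attach.image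
      (fun j => greedyCol t ht A j.1) := by
  have hcard2 : (((Finset.range i).filter (fun j => A j i)).attach.image
      (fun j => greedyCol t ht A j.1)).card < t := by
    refine lt_of_le_of_lt (le_trans Finset.card_image_le ?_) hcard
    simp
  have hne : (Finset.univ \ ((Finset.range i).filter (fun j => A j i)).attach.image
      (fun j => greedyCol t ht A j.1)).Nonempty := by
    rw [← Finset.card_pos, Finset.card_sdiff_of_subset (Finset.subset_univ _)]
    have : (Finset.univ : Finset (Fin t)).card = t := by simp
    omega
  rw [greedyCol, dif_pos hne]
  exact (Finset.mem_sdiff.mp hne.choose_spec).2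

theorem greedyCol_proper (t : ℕ) (ht : 0 < t) (A : ℕ → ℕ → Prop) [DecidableRel A] {i j : ℕ}
    (hji : j < i) (hA : A j i)
    (hcard : ((Finset.range i).filter (fun l => A l i)).card < t) :
    greedyCol t ht A j ≠ greedyCol t ht A i := by
  intro hEq
  apply greedyCol_not_mem t ht A i hcard
  rw [← hEq]
  exact Finset.mem_image.mpr ⟨⟨j, by simp [hji, hA]⟩, Finset.mem_attach _ _, rfl⟩

theorem exists_degree_antitone_equiv (d : V → ℕ) :
    ∃ e : V ≃ Fin (Fintype.card V),
      ∀ i j : Fin (Fintype.card V), i ≤ j → d (e.symm j) ≤ d (e.symm i) := by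
  classical
  let σ0 : V ≃ Fin (Fintype.card V) := Fintype.equivFin V
  let f : Fin (Fintype.card V) → ℕᵒᵈ := fun i => OrderDual.toDual (d (σ0.symm i))
  refine ⟨σ0.trans (Tuple.sort f).symm, fun i j hij => ?_⟩
  have hmono := Tuple.monotone_sort f hij
  simpa [σ0, f, Equiv.symm_trans_apply] using hmono

theorem colorable_of_few_big_degree (G : SimpleGraph V) [DecidableRel G.Adj] (t : ℕ)
    (ht : 0 < t) (hS : (Finset.univ.filter fun v => t ≤ G.degree v).card < t) :
    G.Colorable t := by
  classical
  obtain ⟨e, he⟩ := exists_degree_antitone_equiv (fun v => G.degree v)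
  let A : ℕ → ℕ → Prop := fun i j =>
    ∃ (hi : i < Fintype.card V) (hj : j < Fintype.card V), G.Adj (e.symm ⟨i, hi⟩) (e.symm ⟨j, hj⟩)
  haveI : DecidableRel A := Classical.decRel _
  have hcard : ∀ w : V,
      ((Finset.range (e w : ℕ)).filter (fun l => A l (e w : ℕ))).card < t := by
    intro w
    have hnb : ((Finset.range (e w : ℕ)).filter (fun l => A l (e w : ℕ))).card
        ≤ G.degree w := by
      rw [← SimpleGraph.card_neighborFinset_eq_degree]
      apply Finset.card_le_card_of_injOn (fun l => if hl : l < Fintype.card V then e.symm ⟨l, hl⟩ else w)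
      · intro l hl
        simp only [Finset.mem_coe, Finset.mem_filter, Finset.mem_range] at hl
        obtain ⟨hlw, hl1, hl2, hadj⟩ := hl
        simp only [dif_pos hl1]
        rw [Finset.mem_coe, SimpleGraph.mem_neighborFinset]
        have : (⟨(e w : ℕ), hl2⟩ : Fin (Fintype.card V)) = e w := by ext; rfl
        rw [this, Equiv.symm_apply_apply] at hadj
        exact hadj.symm
      · intro a ha b hb hab
        simp only [Finset.mem_coe, Finset.mem_filter, Finset.mem_range] at ha hb
        obtain ⟨haw, ha1, -⟩ := ha
        obtain ⟨hbw, hb1, -⟩ := hb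
        dsimp only at hab
        rw [dif_pos ha1, dif_pos hb1] at hab
        have := e.symm.injective hab
        simpa using congrArg Fin.val this
    by_cases hdeg : G.degree w < t
    · omega
    push_neg at hdeg
    have hin : (e w : ℕ) < (Finset.univ.filter fun v => t ≤ G.degree v).card := by
      have hle : (Finset.range ((e w : ℕ) + 1)).card ≤
          (Finset.univ.filter fun v => t ≤ G.degree v).card := by
        apply Finset.card_le_card_of_injOn (fun l => if hl : l < Fintype.card V then e.symm ⟨l, hl⟩ else w)
        · intro l hl
          simp only [Finset.mem_coe, Finset.mem_range] at hl
          have hln : l < Fintype.card V := lt_of_lt_of_le hl (e w).2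
          simp only [dif_pos hln]
          simp only [Finset.mem_coe, Finset.mem_filter, Finset.mem_univ, true_and]
          have h2 := he ⟨l, hln⟩ (e w) (by simp [Fin.le_def]; omega)
          rw [Equiv.symm_apply_apply] at h2
          omega
        · intro a ha b hb hab
          simp only [Finset.mem_coe, Finset.mem_range] at ha hb
          have ha1 : a < Fintype.card V := lt_of_lt_of_le ha (e w).2
          have hb1 : b < Fintype.card V := lt_of_lt_of_le hb (e w).2
          dsimp only at hab
          rw [dif_pos ha1, dif_pos hb1] at hab
          have := e.symm.injective hab
          simpa using congrArg Fin.val this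
      simpa using hle
    have hsub : ((Finset.range (e w : ℕ)).filter (fun l => A l (e w : ℕ))).card
        ≤ (e w : ℕ) := by
      refine le_trans (Finset.card_le_card (Finset.filter_subset _ _)) (by simp)
    omega
  refine ⟨SimpleGraph.Coloring.mk (fun v => greedyCol t ht A (e v : ℕ)) ?_⟩
  intro u w huw
  have hne : (e u : ℕ) ≠ (e w : ℕ) := by
    intro hEq
    exact huw.ne (e.injective (Fin.ext hEq))
  have hAuw : ∀ {x y : V}, G.Adj x y → A (e x : ℕ) (e y : ℕ) := by
    intro x y hxy
    refine ⟨(e x).2, (e y).2, ?_⟩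
    have hx : (⟨(e x : ℕ), (e x).2⟩ : Fin (Fintype.card V)) = e x := by ext; rfl
    have hy : (⟨(e y : ℕ), (e y).2⟩ : Fin (Fintype.card V)) = e y := by ext; rfl
    rw [hx, hy, Equiv.symm_apply_apply, Equiv.symm_apply_apply]
    exact hxy
  rcases lt_or_gt_of_ne hne with hlt | hgt
  · exact greedyCol_proper t ht A hlt (hAuw huw) (hcard w)
  · exact (greedyCol_proper t ht A hgt (hAuw huw.symm) (hcard u)).symm

theorem Rprime_nonneg (G : SimpleGraph V) [DecidableRel G.Adj] : 0 ≤ Rprime G := by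
  refine Finset.sum_nonneg fun ε hε => ?_
  induction ε using Sym2.ind with
  | _ u v =>
    simp only [Rprime, Sym2.lift_mk]
    have : (0:ℝ) ≤ max (G.degree u : ℝ) (G.degree v : ℝ) :=
      le_trans (Nat.cast_nonneg _) (le_max_left _ _)
    positivity

end ChromAux

theorem chromatic_le_two_rprime (G : SimpleGraph V) [DecidableRel G.Adj]
    (h : ∀ v, 0 < G.degree v) :
    (G.chromaticNumber.toNat : ℝ) ≤ 2 * Rprime G := by
  classical
  set k := G.chromaticNumber.toNat with hk
  rcases Nat.eq_zero_or_pos k with hk0 | hkpos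
  · rw [hk0]
    push_cast
    linarith [Rprime_nonneg G]
  have hcol : G.Colorable k := G.colorable_chromaticNumber_of_fintype
  have hVne : Nonempty V := by
    by_contra hV
    haveI : IsEmpty V := not_nonempty_iff.mp hV
    rw [hk, G.chromaticNumber_eq_zero_of_isEmpty] at hkpos
    simp at hkpos
  have hk2 : 2 ≤ k := by
    by_contra hlt
    have hk1 : k = 1 := by omega
    obtain ⟨C⟩ := hcol
    obtain ⟨v⟩ := hVne
    have hd := h v
    rw [← SimpleGraph.card_neighborFinset_eq_degree, Finset.card_pos] at hd
    obtain ⟨w, hw⟩ := hd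
    have hadj : G.Adj v w := by rwa [SimpleGraph.mem_neighborFinset] at hw
    apply C.valid hadj
    haveI : Subsingleton (Fin k) := by rw [hk1]; infer_instance
    exact Subsingleton.elim _ _
  set t := k - 1 with htdef
  have ht : 0 < t := by omega
  have htn : t + 1 = k := by omega
  have hnc : ¬ G.Colorable t := by
    intro hc
    have h1 := hc.chromaticNumber_le
    have h2 := ENat.toNat_le_toNat h1 (by simp)
    rw [← hk] at h2
    simp at h2
    omega
  have hS : t ≤ (Finset.univ.filter fun v => t ≤ G.degree v).card := by
    by_contra h'
    exact hnc (colorable_of_few_big_degree G t ht (by omega))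
  obtain ⟨e, he⟩ := exists_degree_antitone_equiv (fun v => G.degree v)
  have htcard : t ≤ Fintype.card V := by
    refine le_trans hS (le_trans (Finset.card_le_card (Finset.filter_subset _ _)) ?_)
    simp
  set fwd : V → ℕ := fun u => (Finset.univ.filter fun v => G.Adj u v ∧ e u < e v).card
    with hfwddef
  have hR : Rprime G = ∑ u : V, (fwd u : ℝ) / (G.degree u : ℝ) := by
    have h1 : ∑ p ∈ (Finset.univ.filter fun p : V × V => G.Adj p.1 p.2 ∧ e p.1 < e p.2),
        (1 : ℝ) / (G.degree p.1 : ℝ) = Rprime G := by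
      unfold Rprime
      refine Finset.sum_bij (fun p _ => Sym2.mk p.1 p.2) ?_ ?_ ?_ ?_
      · rintro ⟨u, v⟩ hp
        simp only [Finset.mem_filter] at hp
        simpa [SimpleGraph.mem_edgeFinset] using hp.2.1
      · rintro ⟨u, v⟩ hp ⟨u', v'⟩ hp' hEq
        simp only [Finset.mem_filter, Finset.mem_univ, true_and] at hp hp'
        rw [Sym2.mk_eq_mk_iff] at hEq
        rcases hEq with hEq | hEq
        · exact hEq
        · have h1 := congrArg Prod.fst hEq
          have h2 := congrArg Prod.snd hEq
          simp only [Prod.fst_swap, Prod.snd_swap] at h1 h2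
          subst h1
          subst h2
          exact absurd hp'.2 (asymm hp.2)
      · intro ε hε
        induction ε using Sym2.ind with
        | _ u v =>
          rw [SimpleGraph.mem_edgeFinset, SimpleGraph.mem_edgeSet] at hε
          have hne : e u ≠ e v := fun hEq => hε.ne (e.injective hEq)
          rcases lt_or_gt_of_ne hne with hlt | hgt
          · exact ⟨(u, v), by simp [hε, hlt], rfl⟩
          · exact ⟨(v, u), by simp [hε.symm, hgt], Sym2.eq_swap⟩
      · rintro ⟨u, v⟩ hp
        simp only [Finset.mem_filter, Finset.mem_univ, true_and] at hp
        have hdle : G.degree v ≤ G.degree u := by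
          have h2 := he (e u) (e v) (le_of_lt hp.2)
          rwa [Equiv.symm_apply_apply, Equiv.symm_apply_apply] at h2
        simp only [Sym2.lift_mk]
        rw [max_eq_left (by exact_mod_cast hdle)]
    rw [← h1, Finset.sum_filter, ← Finset.univ_product_univ, Finset.sum_product]
    refine Finset.sum_congr rfl fun u _ => ?_
    rw [← Finset.sum_filter]
    dsimp only
    rw [Finset.sum_eq_card_nsmul (b := (1 : ℝ) / (G.degree u : ℝ)) (fun a _ => rfl)]
    rw [hfwddef]
    dsimp only
    rw [nsmul_eq_mul, mul_one_div]
  have key : ∀ i : Fin (Fintype.card V), (i : ℕ) < t →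
      (1 : ℝ) - (i : ℕ) / t ≤ (fwd (e.symm i) : ℝ) / (G.degree (e.symm i) : ℝ) := by
    intro i hit
    set u := e.symm i with hu
    have heu : e u = i := by rw [hu, Equiv.apply_symm_apply]
    have hdeg : t ≤ G.degree u := by
      by_contra hdu
      push_neg at hdu
      have hsmall : (Finset.univ.filter fun v => t ≤ G.degree v).card ≤ (i : ℕ) := by
        have hle : (Finset.univ.filter fun v => t ≤ G.degree v).card
            ≤ (Finset.range (i : ℕ)).card := by
          apply Finset.card_le_card_of_injOn (fun w => (e w : ℕ))
          · intro w hw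
            simp only [Finset.mem_coe, Finset.mem_filter, Finset.mem_univ, true_and] at hw
            simp only [Finset.mem_coe, Finset.mem_range]
            by_contra hge
            push_neg at hge
            have h2 := he i (e w) (by rw [Fin.le_def]; omega)
            rw [Equiv.symm_apply_apply] at h2
            rw [← hu] at h2
            omega
          · intro a _ b _ hab
            exact e.injective (Fin.ext hab)
        simpa using hle
      omega
    have hbck : (Finset.univ.filter fun v => G.Adj u v ∧ e v < e u).card ≤ (i : ℕ) := by
      have hle : (Finset.univ.filter fun v => G.Adj u v ∧ e v < e u).card
          ≤ (Finset.range (i : ℕ)).card := by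
        apply Finset.card_le_card_of_injOn (fun w => (e w : ℕ))
        · intro w hw
          simp only [Finset.mem_coe, Finset.mem_filter, Finset.mem_univ, true_and] at hw
          simp only [Finset.mem_coe, Finset.mem_range]
          have h2 := hw.2
          rw [heu] at h2
          exact h2
        · intro a _ b _ hab
          exact e.injective (Fin.ext hab)
      simpa using hle
    have hsplit : fwd u + (Finset.univ.filter fun v => G.Adj u v ∧ e v < e u).card
        = G.degree u := by
      rw [← SimpleGraph.card_neighborFinset_eq_degree]
      have hsp := Finset.card_filter_add_card_filter_not
        (s := G.neighborFinset u) (p := fun v => e u < e v)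
      have e1 : (G.neighborFinset u).filter (fun v => e u < e v)
          = Finset.univ.filter fun v => G.Adj u v ∧ e u < e v := by
        ext w
        simp [SimpleGraph.mem_neighborFinset]
      have e2 : (G.neighborFinset u).filter (fun v => ¬ e u < e v)
          = Finset.univ.filter fun v => G.Adj u v ∧ e v < e u := by
        ext w
        simp only [Finset.mem_filter, SimpleGraph.mem_neighborFinset, Finset.mem_univ,
          true_and, not_lt]
        constructor
        · rintro ⟨hadj, hle⟩
          refine ⟨hadj, lt_of_le_of_ne hle ?_⟩
          intro hEq
          exact hadj.ne' (e.injective hEq)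
        · rintro ⟨hadj, hlt⟩
          exact ⟨hadj, le_of_lt hlt⟩
      rw [e1, e2] at hsp
      rw [hfwddef]
      exact hsp
    have hfineq : G.degree u ≤ fwd u + (i : ℕ) := by omega
    have hdpos : (0 : ℝ) < (G.degree u : ℝ) := by exact_mod_cast h u
    have htpos : (0 : ℝ) < (t : ℝ) := by exact_mod_cast ht
    have hcast : (G.degree u : ℝ) - (i : ℕ) ≤ (fwd u : ℝ) := by
      have : ((G.degree u : ℕ) : ℝ) ≤ ((fwd u + (i : ℕ) : ℕ) : ℝ) := by exact_mod_cast hfineq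
      push_cast at this
      linarith
    have hstep1 : (1 : ℝ) - (i : ℕ) / (G.degree u : ℝ)
        ≤ (fwd u : ℝ) / (G.degree u : ℝ) := by
      have h4 : (1 : ℝ) - (i : ℕ) / (G.degree u : ℝ)
          = ((G.degree u : ℝ) - (i : ℕ)) / (G.degree u : ℝ) := by
        field_simp
      rw [h4]
      exact (div_le_div_iff_of_pos_right hdpos).mpr hcast
    have hstep2 : (i : ℕ) / (G.degree u : ℝ) ≤ (i : ℕ) / (t : ℝ) := by
      apply div_le_div_of_nonneg_left (Nat.cast_nonneg _) htpos
      exact_mod_cast hdeg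
    linarith
  have hsum1 : ∑ j ∈ Finset.range t, ((1 : ℝ) - (j : ℕ) / t) = ((t : ℝ) + 1) / 2 := by
    have htpos : (0 : ℝ) < (t : ℝ) := by exact_mod_cast ht
    have hgauss := congrArg (Nat.cast (R := ℝ)) (Finset.sum_range_id_mul_two t)
    push_cast [Nat.cast_sub (by omega : 1 ≤ t)] at hgauss
    rw [Finset.sum_sub_distrib, Finset.sum_const, Finset.card_range]
    have hdiv : ∑ j ∈ Finset.range t, ((j : ℕ) : ℝ) / (t : ℝ)
        = (∑ j ∈ Finset.range t, ((j : ℕ) : ℝ)) / (t : ℝ) := by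
      rw [Finset.sum_div]
    rw [hdiv]
    field_simp
    simp only [nsmul_eq_mul, mul_one]
    nlinarith [hgauss]
  have hmain : ((t : ℝ) + 1) / 2 ≤ Rprime G := by
    rw [hR]
    have hreind : ∑ u : V, (fwd u : ℝ) / (G.degree u : ℝ)
        = ∑ i : Fin (Fintype.card V), (fwd (e.symm i) : ℝ) / (G.degree (e.symm i) : ℝ) :=
      (Equiv.sum_comp e.symm fun u => (fwd u : ℝ) / (G.degree u : ℝ)).symm
    rw [hreind]
    have hlow : ∑ i : Fin (Fintype.card V),
        (if (i : ℕ) < t then (1 : ℝ) - (i : ℕ) / t else 0)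
        ≤ ∑ i : Fin (Fintype.card V), (fwd (e.symm i) : ℝ) / (G.degree (e.symm i) : ℝ) := by
      apply Finset.sum_le_sum
      intro i _
      by_cases hit : (i : ℕ) < t
      · rw [if_pos hit]
        exact key i hit
      · rw [if_neg hit]
        positivity
    refine le_trans ?_ hlow
    rw [Fin.sum_univ_eq_sum_range (fun j => if j < t then (1 : ℝ) - (j : ℕ) / t else 0)]
    rw [← Finset.sum_filter]
    have hfr : (Finset.range (Fintype.card V)).filter (fun j => j < t) = Finset.range t := by
      ext j
      simp only [Finset.mem_filter, Finset.mem_range]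
      omega
    rw [hfr, hsum1]
  have hkt : ((k : ℕ) : ℝ) = (t : ℝ) + 1 := by exact_mod_cast htn.symm
  rw [hkt]
  linarith
end

section
/- For any graph G without isolated vertices, the list chromatic number satisfies χ_l(G) ≤ 2R'(G), where R'(G) = Σ_{uv∈E} 1/max{d(u),d(v)}. -/
open Finset

variable {V : Type*} [Fintype V] [DecidableEq V]

set_option linter.unusedSectionVars false

lemma exists_greedy_coloring (G : SimpleGraph V) [DecidableRel G.Adj]
    {n : ℕ} (e : Fin n ≃ V) (t : ℕ) (L : V → Finset ℕ) (hL : ∀ v, t ≤ (L v).card)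
    (hb : ∀ i : Fin n, ((univ.filter (fun j : Fin n => j < i ∧ G.Adj (e j) (e i))).card) < t) :
    ∃ c : V → ℕ, (∀ v, c v ∈ L v) ∧ ∀ ⦃u v⦄, G.Adj u v → c u ≠ c v := by
  suffices H : ∀ m : ℕ, m ≤ n → ∃ c : V → ℕ,
      (∀ i : Fin n, (i : ℕ) < m → c (e i) ∈ L (e i)) ∧
      (∀ i j : Fin n, (i : ℕ) < m → (j : ℕ) < m → G.Adj (e i) (e j) → c (e i) ≠ c (e j)) by
    obtain ⟨c, h1, h2⟩ := H n le_rfl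
    refine ⟨c, fun v => ?_, fun u v huv => ?_⟩
    · simpa using h1 (e.symm v) (e.symm v).isLt
    · have := h2 (e.symm u) (e.symm v) (e.symm u).isLt (e.symm v).isLt (by simpa using huv)
      simpa using this
  intro m
  induction m with
  | zero => exact fun _ => ⟨fun _ => 0, fun i hi => absurd hi (Nat.not_lt_zero _),
      fun i j hi => absurd hi (Nat.not_lt_zero _)⟩
  | succ m ih =>
    intro hm
    obtain ⟨c, h1, h2⟩ := ih (Nat.le_of_succ_le hm)
    set a : Fin n := ⟨m, hm⟩ with ha
    set F : Finset ℕ :=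
      (univ.filter (fun j : Fin n => j < a ∧ G.Adj (e j) (e a))).image (fun j => c (e j)) with hF
    have hFcard : F.card < t := lt_of_le_of_lt Finset.card_image_le (hb a)
    have hne : (L (e a) \ F).Nonempty := by
      apply Finset.card_pos.mp
      have h3 : F.card < (L (e a)).card := lt_of_lt_of_le hFcard (hL (e a))
      calc 0 < (L (e a)).card - F.card := Nat.sub_pos_of_lt h3
        _ ≤ (L (e a) \ F).card := Finset.le_card_sdiff _ _
    obtain ⟨col, hcol⟩ := hne
    rw [Finset.mem_sdiff] at hcol
    have hupd : ∀ i : Fin n, i ≠ a → Function.update c (e a) col (e i) = c (e i) := by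
      intro i hi
      exact Function.update_of_ne (fun hh => hi (e.injective hh)) _ _
    have hupda : Function.update c (e a) col (e a) = col := Function.update_self _ _ _
    refine ⟨Function.update c (e a) col, ?_, ?_⟩
    · intro i hi
      rcases Nat.lt_succ_iff_lt_or_eq.mp hi with hi' | hi'
      · rw [hupd i (by intro hh; rw [hh] at hi'; exact absurd hi' (lt_irrefl _))]
        exact h1 i hi'
      · have : i = a := Fin.ext hi'
        rw [this, hupda]; exact hcol.1
    · intro i j hi hj hadj
      rcases Nat.lt_succ_iff_lt_or_eq.mp hi with hi' | hi' <;>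
        rcases Nat.lt_succ_iff_lt_or_eq.mp hj with hj' | hj'
      · rw [hupd i (by intro hh; rw [hh] at hi'; exact absurd hi' (lt_irrefl _)),
          hupd j (by intro hh; rw [hh] at hj'; exact absurd hj' (lt_irrefl _))]
        exact h2 i j hi' hj' hadj
      · have hja : j = a := Fin.ext hj'
        have hia : i ≠ a := by intro hh; rw [hh] at hi'; exact absurd hi' (lt_irrefl _)
        rw [hupd i hia, hja, hupda]
        intro hc
        apply hcol.2
        rw [hF]
        apply Finset.mem_image.mpr
        refine ⟨i, Finset.mem_filter.mpr ⟨Finset.mem_univ _, ?_, ?_⟩, hc⟩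
        · exact lt_of_le_of_ne (Fin.le_def.mpr (by omega)) hia
        · rw [← hja]; exact hadj
      · have hia : i = a := Fin.ext hi'
        have hja : j ≠ a := by intro hh; rw [hh] at hj'; exact absurd hj' (lt_irrefl _)
        rw [hupd j hja, hia, hupda]
        intro hc
        apply hcol.2
        rw [hF]
        apply Finset.mem_image.mpr
        refine ⟨j, Finset.mem_filter.mpr ⟨Finset.mem_univ _, ?_, ?_⟩, hc.symm⟩
        · exact lt_of_le_of_ne (Fin.le_def.mpr (by omega)) hja
        · rw [← hia]; exact hadj.symm
      · have hij : i = j := Fin.ext (hi'.trans hj'.symm)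
        rw [hij] at hadj
        exact absurd hadj (G.irrefl)



lemma rprime_eq (G : SimpleGraph V) [DecidableRel G.Adj]
    {n : ℕ} (e : Fin n ≃ V)
    (mono : ∀ i j : Fin n, i ≤ j → G.degree (e j) ≤ G.degree (e i)) :
    Rprime G = ∑ i : Fin n,
      ((univ.filter (fun j : Fin n => i < j ∧ G.Adj (e i) (e j))).card : ℝ)
        / (G.degree (e i) : ℝ) := by
  classical
  have key : Rprime G = ∑ p ∈ (univ : Finset (Fin n × Fin n)).filter
      (fun p => p.1 < p.2 ∧ G.Adj (e p.1) (e p.2)), (1 : ℝ) / (G.degree (e p.1) : ℝ) := by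
    rw [Rprime]
    symm
    refine Finset.sum_bij (fun (p : Fin n × Fin n) _ => s(e p.1, e p.2)) ?_ ?_ ?_ ?_
    · intro p hp
      simp only [Finset.mem_filter, Finset.mem_univ, true_and] at hp
      simpa [SimpleGraph.mem_edgeFinset] using hp.2
    · intro p hp q hq hpq
      simp only [Finset.mem_filter, Finset.mem_univ, true_and] at hp hq
      replace hpq := (Sym2.mk_eq_mk_iff (p := (e p.1, e p.2)) (q := (e q.1, e q.2))).mp hpq
      rcases hpq with h' | h'
      · have h1 : e p.1 = e q.1 := congrArg Prod.fst h'
        have h2 : e p.2 = e q.2 := congrArg Prod.snd h'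
        exact Prod.ext (e.injective h1) (e.injective h2)
      · have h1 : e p.1 = e q.2 := congrArg Prod.fst h'
        have h2 : e p.2 = e q.1 := congrArg Prod.snd h'
        have e1 : p.1 = q.2 := e.injective h1
        have e2 : p.2 = q.1 := e.injective h2
        have h3 := hp.1
        rw [e1, e2] at h3
        exact absurd hq.1 (asymm h3)
    · intro x hx
      induction x with
      | _ u v =>
        rw [SimpleGraph.mem_edgeFinset, SimpleGraph.mem_edgeSet] at hx
        rcases lt_or_gt_of_ne (fun hh : e.symm u = e.symm v =>
          hx.ne (by simpa using congrArg e hh)) with hlt | hlt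
        · exact ⟨(e.symm u, e.symm v), Finset.mem_filter.mpr ⟨Finset.mem_univ _,
            hlt, by simpa using hx⟩, by simp⟩
        · exact ⟨(e.symm v, e.symm u), Finset.mem_filter.mpr ⟨Finset.mem_univ _,
            hlt, by simpa using hx.symm⟩, by simp [Sym2.eq_swap]⟩
    · intro p hp
      simp only [Finset.mem_filter, Finset.mem_univ, true_and] at hp
      rw [Sym2.lift_mk]
      have : (G.degree (e p.2) : ℝ) ≤ (G.degree (e p.1) : ℝ) := by
        exact_mod_cast mono p.1 p.2 (le_of_lt hp.1)
      change (1:ℝ) / (G.degree (e p.1) : ℝ)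
        = 1 / max ((G.degree (e p.1)):ℝ) ((G.degree (e p.2)):ℝ)
      rw [max_eq_left this]
  have inner : ∀ i : Fin n,
      (∑ a : Fin n, if i < a ∧ G.Adj (e i) (e a) then (1:ℝ)/(G.degree (e i)) else 0)
      = ((univ.filter (fun j : Fin n => i < j ∧ G.Adj (e i) (e j))).card : ℝ)
        / (G.degree (e i) : ℝ) := by
    intro i
    rw [← Finset.sum_filter, Finset.sum_const, nsmul_eq_mul, mul_one_div]
  rw [key, Finset.sum_filter, Fintype.sum_prod_type]
  exact Finset.sum_congr rfl fun i _ => inner i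


lemma key_arith {n t : ℕ} (d bf hcf : Fin n → ℕ) (R : ℝ)
    (hR : R = ∑ i : Fin n, (hcf i : ℝ) / (d i : ℝ))
    (hd1 : ∀ i, 1 ≤ d i) (hsplit : ∀ i, bf i + hcf i = d i)
    (hblei : ∀ i : Fin n, bf i ≤ (i:ℕ))
    (ht1 : 1 ≤ t) (ht_le : t ≤ n)
    (htP : ∀ j : Fin n, (j:ℕ) < t → t - 1 ≤ d j) :
    (t : ℝ) ≤ 2 * R := by
  rw [hR]
  have step1 : ∑ i ∈ univ.filter (fun i : Fin n => (i:ℕ) < t), ((hcf i : ℝ) / (d i : ℝ))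
      ≤ ∑ i : Fin n, (hcf i : ℝ) / (d i : ℝ) := by
    apply Finset.sum_le_sum_of_subset_of_nonneg (Finset.filter_subset _ _)
    intro i _ _
    positivity
  set u : ℝ := (t:ℝ) - 1 with hu
  have hu0 : 0 ≤ u := by
    rw [hu]
    have : (1:ℝ) ≤ (t:ℝ) := by exact_mod_cast ht1
    linarith
  have step2 : ∀ i ∈ univ.filter (fun i : Fin n => (i:ℕ) < t),
      1 - (i:ℕ)/u ≤ (hcf i : ℝ) / (d i : ℝ) := by
    intro i hi
    rw [Finset.mem_filter] at hi
    have hit := hi.2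
    have hdpos : (0:ℝ) < (d i : ℝ) := by exact_mod_cast hd1 i
    have hhc : (hcf i : ℝ) = (d i : ℝ) - (bf i : ℝ) := by
      have := hsplit i
      push_cast [← this]
      ring
    rw [hhc, sub_div, div_self (ne_of_gt hdpos)]
    have hfrac : (bf i : ℝ) / (d i : ℝ) ≤ (i:ℕ)/u := by
      rcases Nat.eq_zero_or_pos (i:ℕ) with hi0 | hi0
      · have hb0 : bf i = 0 := Nat.le_zero.mp (hi0 ▸ hblei i)
        rw [hb0, hi0]
        simp
      · have ht2 : 2 ≤ t := by omega
        have hupos : (0:ℝ) < u := by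
          rw [hu]
          have : (2:ℝ) ≤ (t:ℝ) := by exact_mod_cast ht2
          linarith
        have hdu : u ≤ (d i : ℝ) := by
          have := htP i hit
          rw [hu]
          have h2 : (t:ℝ) - 1 ≤ ((t - 1 : ℕ) : ℝ) := by
            push_cast [Nat.cast_sub ht1]
            linarith
          calc (t:ℝ) - 1 ≤ ((t-1:ℕ):ℝ) := h2
            _ ≤ (d i : ℝ) := by exact_mod_cast this
        calc (bf i : ℝ) / (d i : ℝ) ≤ ((i:ℕ) : ℝ) / (d i : ℝ) := by
              gcongr
              exact_mod_cast hblei i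
            _ ≤ ((i:ℕ):ℝ) / u := div_le_div_of_nonneg_left (by positivity) hupos hdu
    linarith
  have step3 : ∑ i ∈ univ.filter (fun i : Fin n => (i:ℕ) < t), (1 - ((i:ℕ):ℝ)/u)
      = ∑ k ∈ Finset.range t, (1 - (k:ℝ)/u) := by
    refine Finset.sum_nbij' (fun i => (i:ℕ))
      (fun k => (⟨k % n, Nat.mod_lt _ (by omega)⟩ : Fin n)) ?_ ?_ ?_ ?_ ?_
    · intro i hi
      rw [Finset.mem_filter] at hi
      exact Finset.mem_range.mpr hi.2
    · intro k hk
      rw [Finset.mem_range] at hk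
      have hkn : k < n := lt_of_lt_of_le hk ht_le
      rw [Finset.mem_filter]
      refine ⟨Finset.mem_univ _, ?_⟩
      simp [Nat.mod_eq_of_lt hkn, hk]
    · intro i hi
      rw [Finset.mem_filter] at hi
      apply Fin.ext
      simp [Nat.mod_eq_of_lt i.isLt]
    · intro k hk
      rw [Finset.mem_range] at hk
      simp [Nat.mod_eq_of_lt (lt_of_lt_of_le hk ht_le)]
    · intro i _
      rfl
  have step4 : (t:ℝ)/2 ≤ ∑ k ∈ Finset.range t, (1 - (k:ℝ)/u) := by
    rw [Finset.sum_sub_distrib, Finset.sum_const, Finset.card_range, nsmul_eq_mul, mul_one]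
    have hgauss : ∑ k ∈ Finset.range t, (k:ℝ) = (t:ℝ) * ((t:ℝ)-1) / 2 := by
      have h2 := Finset.sum_range_id_mul_two t
      have : ((∑ i ∈ Finset.range t, i : ℕ) : ℝ) * 2 = (t:ℝ) * (((t:ℕ) - 1 : ℕ):ℝ) := by
        exact_mod_cast congrArg (Nat.cast : ℕ → ℝ) h2
      push_cast [Nat.cast_sub ht1] at this
      linarith
    rw [← Finset.sum_div, hgauss]
    rcases eq_or_lt_of_le ht1 with h1 | h2
    · rw [hu, ← h1]
      norm_num
    · have hupos : (0:ℝ) < (t:ℝ) - 1 := by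
        have : (2:ℝ) ≤ (t:ℝ) := by exact_mod_cast h2
        linarith
      rw [hu]
      have hsimp : (t:ℝ) * ((t:ℝ)-1) / 2 / ((t:ℝ)-1) = (t:ℝ)/2 := by
        field_simp
      rw [hsimp]
      linarith
  have := Finset.sum_le_sum step2
  linarith

theorem listChromatic_le_two_rprime (G : SimpleGraph V) [DecidableRel G.Adj]
    (h : ∀ v, 0 < G.degree v) :
    (listChromaticNumber G : ℝ) ≤ 2 * Rprime G := by
  classical
  -- trivial case: V empty
  rcases isEmpty_or_nonempty V with hV | hV
  · have h1 : listChromaticNumber G = 0 := by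
      apply Nat.eq_zero_of_le_zero
      apply Nat.sInf_le
      intro L _
      exact ⟨fun _ => 0, fun v => (IsEmpty.false v).elim, fun u v _ => (IsEmpty.false u).elim⟩
    have h2 : (0:ℝ) ≤ Rprime G := by
      apply Finset.sum_nonneg
      intro x hx
      induction x with
      | _ u v =>
        rw [Sym2.lift_mk]
        positivity
    rw [h1]
    push_cast
    linarith
  set n := Fintype.card V with hn
  have hn1 : 1 ≤ n := Fintype.card_pos
  let e0 : Fin n ≃ V := (Fintype.equivFin V).symm
  let f : Fin n → ℕᵒᵈ := fun i => OrderDual.toDual (G.degree (e0 i))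
  let e : Fin n ≃ V := (Tuple.sort f).trans e0
  have mono : ∀ i j : Fin n, i ≤ j → G.degree (e j) ≤ G.degree (e i) := by
    intro i j hij
    exact Tuple.monotone_sort f hij
  set d : Fin n → ℕ := fun i => G.degree (e i) with hd
  set b : Fin n → ℕ :=
    fun i => (univ.filter (fun j : Fin n => j < i ∧ G.Adj (e j) (e i))).card with hb
  set hc : Fin n → ℕ :=
    fun i => (univ.filter (fun j : Fin n => i < j ∧ G.Adj (e i) (e j))).card with hhc
  have hd1 : ∀ i, 1 ≤ d i := fun i => h (e i)
  have hdeg : ∀ i : Fin n, (univ.filter (fun j : Fin n => G.Adj (e i) (e j))).card = d i := by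
    intro i
    rw [hd]
    simp only
    rw [← SimpleGraph.card_neighborFinset_eq_degree]
    apply Finset.card_bij (fun j _ => e j)
    · intro j hj
      simp only [Finset.mem_filter, Finset.mem_univ, true_and] at hj
      rwa [SimpleGraph.mem_neighborFinset]
    · intro j1 _ j2 _ hh; exact e.injective hh
    · intro v hv
      rw [SimpleGraph.mem_neighborFinset] at hv
      exact ⟨e.symm v, Finset.mem_filter.mpr ⟨Finset.mem_univ _, by simpa using hv⟩, by simp⟩
  have hsplit : ∀ i : Fin n, b i + hc i = d i := by
    intro i
    have hu : (univ.filter (fun j : Fin n => G.Adj (e i) (e j)))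
        = (univ.filter (fun j : Fin n => j < i ∧ G.Adj (e j) (e i)))
          ∪ (univ.filter (fun j : Fin n => i < j ∧ G.Adj (e i) (e j))) := by
      ext j
      simp only [Finset.mem_union, Finset.mem_filter, Finset.mem_univ, true_and]
      constructor
      · intro hj
        rcases lt_trichotomy j i with hlt | heq | hgt
        · exact Or.inl ⟨hlt, hj.symm⟩
        · exact absurd hj (by rw [heq]; exact G.irrefl)
        · exact Or.inr ⟨hgt, hj⟩
      · rintro (⟨_, hj⟩ | ⟨_, hj⟩)
        exacts [hj.symm, hj]
    have hdis : Disjoint (univ.filter (fun j : Fin n => j < i ∧ G.Adj (e j) (e i)))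
        (univ.filter (fun j : Fin n => i < j ∧ G.Adj (e i) (e j))) := by
      rw [Finset.disjoint_left]
      intro j h1 h2
      simp only [Finset.mem_filter] at h1 h2
      exact absurd h2.2.1 (asymm h1.2.1)
    rw [← hdeg i, hu, Finset.card_union_of_disjoint hdis]
  have hblei : ∀ i : Fin n, b i ≤ (i:ℕ) := by
    intro i
    have hsub : (univ.filter (fun j : Fin n => j < i ∧ G.Adj (e j) (e i))) ⊆ Finset.Iio i := by
      intro j hj
      simp only [Finset.mem_filter] at hj
      exact Finset.mem_Iio.mpr hj.2.1
    calc b i ≤ (Finset.Iio i).card := Finset.card_le_card hsub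
      _ = i := Fin.card_Iio i
  have hbled : ∀ i : Fin n, b i ≤ d i := fun i => (hsplit i) ▸ Nat.le_add_right _ _
  -- the threshold t
  set S : Finset ℕ :=
    (Finset.range (n+1)).filter (fun t => ∀ j : Fin n, (j:ℕ) < t → t ≤ d j + 1) with hS
  have h0S : (0:ℕ) ∈ S := by simp [hS]
  set t : ℕ := S.max' ⟨0, h0S⟩ with ht
  have htS : t ∈ S := Finset.max'_mem _ _
  have ht_le : t ≤ n := by
    have := (Finset.mem_filter.mp htS).1
    rw [Finset.mem_range] at this
    omega
  have htP : ∀ j : Fin n, (j:ℕ) < t → t - 1 ≤ d j := by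
    intro j hj
    have := (Finset.mem_filter.mp htS).2 j hj
    omega
  have ht1 : 1 ≤ t := by
    apply Finset.le_max'
    rw [hS, Finset.mem_filter, Finset.mem_range]
    exact ⟨by omega, fun j hj => by have := hd1 j; omega⟩
  have htmax : ∀ i : Fin n, t ≤ (i:ℕ) → d i < t := by
    intro i hi
    have htn : t < n := lt_of_le_of_lt hi i.isLt
    have hnot : (t+1) ∉ S := by
      intro hmem
      have := Finset.le_max' S (t+1) hmem
      omega
    rw [hS, Finset.mem_filter, Finset.mem_range] at hnot
    push_neg at hnot
    obtain ⟨j, hj1, hj2⟩ := hnot (by omega)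
    have hji : j ≤ i := Fin.le_def.mpr (by omega)
    have h5 : d i ≤ d j := mono j i hji
    omega
  have hblt : ∀ i : Fin n, b i < t := by
    intro i
    rcases lt_or_ge (i:ℕ) t with hi | hi
    · exact lt_of_le_of_lt (hblei i) hi
    · exact lt_of_le_of_lt (hbled i) (htmax i hi)
  -- list chromatic number ≤ t
  have hchi : listChromaticNumber G ≤ t := by
    apply Nat.sInf_le
    intro L hL
    exact exists_greedy_coloring G e t L hL hblt
  -- Rprime bound
  have hR : Rprime G = ∑ i : Fin n, (hc i : ℝ) / (d i : ℝ) := rprime_eq G e mono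
  have key : (t : ℝ) ≤ 2 * Rprime G :=
    key_arith d b hc (Rprime G) hR hd1 hsplit hblei ht1 ht_le htP
  calc (listChromaticNumber G : ℝ) ≤ (t : ℝ) := by exact_mod_cast hchi
    _ ≤ 2 * Rprime G := key
end

section
/- For the graph K_k • K_{1,n−k} with 3 ≤ k ≤ n, obtained by identifying the center of the star K_{1,n−k} with a vertex of K_k, one has 2R'(K_k • K_{1,n−k}) = k. -/
open Finset

variable {V : Type*} [Fintype V] [DecidableEq V]

def dartEquivSigma (G : SimpleGraph V) : G.Dart ≃ Σ v, G.neighborSet v where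
  toFun d := ⟨d.fst, d.snd, d.adj⟩
  invFun s := ⟨(s.1, s.2), s.2.2⟩
  left_inv d := by ext <;> rfl
  right_inv s := rfl

lemma two_mul_sum_edges (G : SimpleGraph V) [DecidableRel G.Adj]
    (f : V → V → ℝ) (hf : ∀ u v, f u v = f v u) :
    2 * ∑ e ∈ G.edgeFinset, Sym2.lift ⟨f, hf⟩ e = ∑ u, ∑ v ∈ G.neighborFinset u, f u v := by
  have h1 : ∑ d : G.Dart, f d.fst d.snd
      = 2 * ∑ e ∈ G.edgeFinset, Sym2.lift ⟨f, hf⟩ e := by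
    rw [← Finset.sum_fiberwise_of_maps_to (g := SimpleGraph.Dart.edge) (t := G.edgeFinset)
        (fun d _ => by simp [SimpleGraph.mem_edgeFinset]), Finset.mul_sum]
    apply Finset.sum_congr rfl
    intro e he
    rw [SimpleGraph.mem_edgeFinset] at he
    induction e with
    | _ u v =>
      have d : G.Dart := ⟨(u, v), he⟩
      have hfib : ({d' : G.Dart | d'.edge = s(u,v)} : Finset _) = {⟨(u,v), he⟩, (⟨(u,v), he⟩ : G.Dart).symm} := by
        have := SimpleGraph.Dart.edge_fiber (⟨(u,v), he⟩ : G.Dart)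
        exact this
      rw [show (univ.filter fun d' : G.Dart => d'.edge = s(u,v)) = {(⟨(u,v), he⟩ : G.Dart), (⟨(u,v), he⟩ : G.Dart).symm} from hfib]
      rw [Finset.sum_pair (SimpleGraph.Dart.symm_ne _).symm]
      simp [SimpleGraph.Dart.symm, hf u v, two_mul]
  rw [← h1]
  set e := dartEquivSigma G with he
  have h2 : ∑ d : G.Dart, f d.fst d.snd = ∑ p : Σ v, G.neighborSet v, f p.1 p.2 :=
    by
      rw [← Equiv.sum_comp e (fun p : Σ v, G.neighborSet v => f p.1 p.2)]
      exact Finset.sum_congr rfl fun d _ => rfl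
  rw [h2, ← Finset.univ_sigma_univ, Finset.sum_sigma]
  exact Finset.sum_congr rfl fun u _ => Finset.sum_set_coe (f := fun v => f u v) _

lemma cs_adj {n k : ℕ} (u v : Fin n) : (cliqueStar n k).Adj u v ↔
    ((u : ℕ) ≠ (v : ℕ) ∧ (((u : ℕ) < k ∧ (v : ℕ) < k) ∨
    ((u : ℕ) + 1 = k ∧ k ≤ (v : ℕ)) ∨ ((v : ℕ) + 1 = k ∧ k ≤ (u : ℕ)))) := by
  simp [cliqueStar, Fin.ext_iff, ne_eq]

lemma card_filter_fin {n : ℕ} (P : ℕ → Prop) [DecidablePred P] :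
    (univ.filter fun v : Fin n => P v.val).card = ((Finset.range n).filter P).card := by
  rw [show (univ.filter fun v : Fin n => P v.val)
      = ((Finset.range n).filter P).attachFin
        (fun m hm => Finset.mem_range.mp (Finset.mem_filter.mp hm).1) from ?_,
    Finset.card_attachFin]
  ext v
  simp [Finset.mem_attachFin, Finset.mem_filter, Finset.mem_range, v.isLt]

theorem rprime_cliqueStar (n k : ℕ) (hk : 3 ≤ k) (hkn : k ≤ n) :
    2 * Rprime (cliqueStar n k) = k := by
  have hn3 : 3 ≤ n := le_trans hk hkn
  have hn3' : (3 : ℝ) ≤ (n : ℝ) := by exact_mod_cast hn3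
  set hub : Fin n := ⟨k - 1, by omega⟩ with hhub
  have hubval : (hub : ℕ) = k - 1 := rfl
  -- neighbor set descriptions
  have hN1 : ∀ u : Fin n, (u : ℕ) < k → (u : ℕ) + 1 ≠ k →
      (cliqueStar n k).neighborFinset u = (univ.filter fun v : Fin n => (v : ℕ) < k).erase u := by
    intro u hu hnh
    ext v
    simp only [SimpleGraph.mem_neighborFinset, Finset.mem_erase, Finset.mem_filter,
      Finset.mem_univ, true_and, cs_adj, Fin.ext_iff, ne_eq]
    omega
  have hN2 : (cliqueStar n k).neighborFinset hub = univ.erase hub := by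
    ext v
    simp only [SimpleGraph.mem_neighborFinset, Finset.mem_erase, Finset.mem_univ, and_true,
      cs_adj, Fin.ext_iff, ne_eq, hubval]
    omega
  have hN3 : ∀ u : Fin n, k ≤ (u : ℕ) → (cliqueStar n k).neighborFinset u = {hub} := by
    intro u hu
    ext v
    simp only [SimpleGraph.mem_neighborFinset, Finset.mem_singleton, cs_adj, Fin.ext_iff,
      ne_eq, hubval]
    omega
  -- cardinalities
  have hcard1 : (univ.filter fun v : Fin n => (v : ℕ) < k).card = k := by
    have h := card_filter_fin (n := n) (fun m => m < k)
    rw [show (Finset.range n).filter (fun m => m < k) = Finset.range k from by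
      ext m; simp [Finset.mem_range]; omega, Finset.card_range] at h
    exact h
  have hubmem : hub ∈ (univ.filter fun v : Fin n => (v : ℕ) < k) := by
    simp [hubval]; omega
  -- degrees
  have hdeg1 : ∀ u : Fin n, (u : ℕ) < k → (u : ℕ) + 1 ≠ k → (cliqueStar n k).degree u = k - 1 := by
    intro u hu hnh
    rw [← SimpleGraph.card_neighborFinset_eq_degree, hN1 u hu hnh,
      Finset.card_erase_of_mem (by simp [hu]), hcard1]
  have hdeg2 : (cliqueStar n k).degree hub = n - 1 := by
    rw [← SimpleGraph.card_neighborFinset_eq_degree, hN2,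
      Finset.card_erase_of_mem (Finset.mem_univ _), Finset.card_univ, Fintype.card_fin]
  have hdeg3 : ∀ u : Fin n, k ≤ (u : ℕ) → (cliqueStar n k).degree u = 1 := by
    intro u hu
    rw [← SimpleGraph.card_neighborFinset_eq_degree, hN3 u hu, Finset.card_singleton]
  have hdegle : ∀ v : Fin n, ((cliqueStar n k).degree v : ℝ) ≤ ((n : ℝ) - 1) := by
    intro v
    have := SimpleGraph.degree_lt_card_verts (G := cliqueStar n k) v
    rw [Fintype.card_fin] at this
    have : (cliqueStar n k).degree v ≤ n - 1 := by omega
    calc ((cliqueStar n k).degree v : ℝ) ≤ ((n - 1 : ℕ) : ℝ) := by exact_mod_cast this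
      _ = (n : ℝ) - 1 := by push_cast [(by omega : 1 ≤ n)]; ring
  have hcast1 : ((k - 1 : ℕ) : ℝ) = (k : ℝ) - 1 := by push_cast [(by omega : 1 ≤ k)]; ring
  have hcastn : ((n - 1 : ℕ) : ℝ) = (n : ℝ) - 1 := by push_cast [(by omega : 1 ≤ n)]; ring
  have hK1 : (0 : ℝ) < (k : ℝ) - 1 := by
    have : (3 : ℝ) ≤ (k : ℝ) := by exact_mod_cast hk
    linarith
  have hN1' : (0 : ℝ) < (n : ℝ) - 1 := by
    have : (3 : ℝ) ≤ (n : ℝ) := by exact_mod_cast hn3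
    linarith
  -- the edge weight
  unfold Rprime
  rw [two_mul_sum_edges]
  set w : Fin n → Fin n → ℝ := fun u v => 1 / max ((cliqueStar n k).degree u : ℝ) ((cliqueStar n k).degree v) with hw
  -- inner sums
  have inner_hub : ∑ v ∈ (cliqueStar n k).neighborFinset hub, w hub v = 1 := by
    rw [hN2]
    rw [Finset.sum_congr rfl (fun v _ => show w hub v = 1 / ((n : ℝ) - 1) from by
      rw [hw]; simp only; rw [hdeg2, hcastn, max_eq_left (hdegle v)])]
    rw [Finset.sum_const, Finset.card_erase_of_mem (Finset.mem_univ _), Finset.card_univ,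
      Fintype.card_fin, nsmul_eq_mul]
    rw [show ((n - 1 : ℕ) : ℝ) = (n : ℝ) - 1 from hcastn]
    field_simp
  have inner_clique : ∀ u : Fin n, (u : ℕ) < k → (u : ℕ) + 1 ≠ k →
      ∑ v ∈ (cliqueStar n k).neighborFinset u, w u v
        = 1 / ((n : ℝ) - 1) + ((k : ℝ) - 2) * (1 / ((k : ℝ) - 1)) := by
    intro u hu hnh
    rw [hN1 u hu hnh]
    have hubmem' : hub ∈ (univ.filter fun v : Fin n => (v : ℕ) < k).erase u := by
      rw [Finset.mem_erase]
      exact ⟨by rw [Fin.ne_iff_vne, hubval]; omega, hubmem⟩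
    rw [← Finset.add_sum_erase _ _ hubmem']
    have h2 : ∀ v ∈ ((univ.filter fun v : Fin n => (v : ℕ) < k).erase u).erase hub,
        w u v = 1 / ((k : ℝ) - 1) := by
      intro v hv
      simp only [Finset.mem_erase, Finset.mem_filter, Finset.mem_univ, true_and] at hv
      have hvk : (v : ℕ) < k := hv.2.2
      have hvnh : (v : ℕ) + 1 ≠ k := by
        intro h; exact hv.1 (by rw [Fin.ext_iff, hubval]; omega)
      rw [hw]; simp only
      rw [hdeg1 u hu hnh, hdeg1 v hvk hvnh, hcast1, max_self]
    rw [Finset.sum_congr rfl h2, Finset.sum_const,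
      Finset.card_erase_of_mem hubmem', Finset.card_erase_of_mem (by simp [hu]), hcard1,
      nsmul_eq_mul]
    have hwhub : w u hub = 1 / ((n : ℝ) - 1) := by
      rw [hw]; simp only
      rw [hdeg1 u hu hnh, hdeg2, hcast1, hcastn, max_eq_right (by
        have : (k : ℝ) ≤ (n : ℝ) := by exact_mod_cast hkn
        linarith)]
    rw [hwhub, show ((k - 1 - 1 : ℕ) : ℝ) = (k : ℝ) - 2 from by
      push_cast [(by omega : 1 ≤ k - 1), (by omega : 1 ≤ k)]; ring]
  have inner_leaf : ∀ u : Fin n, k ≤ (u : ℕ) →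
      ∑ v ∈ (cliqueStar n k).neighborFinset u, w u v = 1 / ((n : ℝ) - 1) := by
    intro u hu
    rw [hN3 u hu, Finset.sum_singleton, hw]; simp only
    rw [hdeg3 u hu, hdeg2, hcastn, Nat.cast_one, max_eq_right (by linarith : (1:ℝ) ≤ (n:ℝ) - 1)]
  -- outer sum
  rw [← Finset.sum_filter_add_sum_filter_not univ (fun u : Fin n => (u : ℕ) < k)]
  have houter2 : ∑ u ∈ univ.filter (fun u : Fin n => ¬ (u : ℕ) < k),
      ∑ v ∈ (cliqueStar n k).neighborFinset u, w u v = ((n : ℝ) - (k : ℝ)) * (1 / ((n : ℝ) - 1)) := by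
    rw [Finset.sum_congr rfl (fun u hu => inner_leaf u (by
      simp only [Finset.mem_filter] at hu; omega))]
    rw [Finset.sum_const, nsmul_eq_mul]
    congr 1
    have h := card_filter_fin (n := n) (fun m => ¬ m < k)
    rw [show (Finset.range n).filter (fun m => ¬ m < k) = Finset.Ico k n from by
      ext m; simp [Finset.mem_range, Finset.mem_Ico]; omega, Nat.card_Ico] at h
    rw [h]
    push_cast [hkn]; ring
  have houter1 : ∑ u ∈ univ.filter (fun u : Fin n => (u : ℕ) < k),
      ∑ v ∈ (cliqueStar n k).neighborFinset u, w u v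
      = 1 + ((k : ℝ) - 1) * (1 / ((n : ℝ) - 1) + ((k : ℝ) - 2) * (1 / ((k : ℝ) - 1))) := by
    rw [← Finset.add_sum_erase _ _ hubmem, inner_hub]
    congr 1
    rw [Finset.sum_congr rfl (fun u hu => by
      simp only [Finset.mem_erase, Finset.mem_filter, Finset.mem_univ, true_and] at hu
      exact inner_clique u hu.2 (fun h => hu.1 (by rw [Fin.ext_iff, hubval]; omega)))]
    rw [Finset.sum_const, Finset.card_erase_of_mem hubmem, hcard1, nsmul_eq_mul, hcast1]
  rw [houter1, houter2]
  field_simp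
  ring
end

section
/- For any graph G with m edges, the Randić index satisfies R(G) ≥ m/μ, where μ is the largest eigenvalue of the adjacency matrix of G. -/
open Finset

variable {V : Type*} [Fintype V] [DecidableEq V]

open Matrix

lemma rayleigh_aux {n : Type*} [Fintype n] [DecidableEq n] [Nonempty n]
    {A : Matrix n n ℝ} (hA : A.IsHermitian) (x : n → ℝ) :
    x ⬝ᵥ (A *ᵥ x) ≤ (⨆ i, hA.eigenvalues i) * (x ⬝ᵥ x) := by
  set U : Matrix n n ℝ := (hA.eigenvectorUnitary : Matrix n n ℝ) with hUdef
  have hU1 : U * star U = 1 := (Matrix.mem_unitaryGroup_iff).mp hA.eigenvectorUnitary.2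
  set y : n → ℝ := star U *ᵥ x with hy
  have hsU : star U = Uᵀ := by
    rw [Matrix.star_eq_conjTranspose, Matrix.conjTranspose_eq_transpose_of_trivial]
  have hdiag : (Matrix.diagonal (RCLike.ofReal ∘ hA.eigenvalues) : Matrix n n ℝ)
      = Matrix.diagonal hA.eigenvalues := by congr 1
  have hxy : x ⬝ᵥ (U *ᵥ y) = y ⬝ᵥ y := by
    rw [Matrix.dotProduct_mulVec, ← Matrix.mulVec_transpose, ← hsU, ← hy]
  have key : x ⬝ᵥ (A *ᵥ x) = ∑ i, hA.eigenvalues i * y i ^ 2 := by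
    conv_lhs => rw [hA.spectral_theorem]
    simp only [Unitary.conjStarAlgAut_apply, Unitary.coe_star]
    rw [hdiag, ← Matrix.mulVec_mulVec, ← Matrix.mulVec_mulVec, ← hy,
      Matrix.dotProduct_mulVec, ← Matrix.mulVec_transpose, ← hsU, ← hy]
    simp only [dotProduct, Matrix.mulVec_diagonal]
    exact Finset.sum_congr rfl fun i _ => by ring
  have keyx : x ⬝ᵥ x = ∑ i, y i ^ 2 := by
    have h1 : x ⬝ᵥ x = x ⬝ᵥ ((U * star U) *ᵥ x) := by rw [hU1, Matrix.one_mulVec]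
    rw [h1, ← Matrix.mulVec_mulVec, ← hy, hxy]
    simp [dotProduct, sq]
  rw [key, keyx, Finset.mul_sum]
  refine Finset.sum_le_sum fun i _ => ?_
  exact mul_le_mul_of_nonneg_right (le_ciSup (Set.Finite.bddAbove (Set.finite_range _)) i)
    (sq_nonneg _)

lemma sum_darts_eq_twice_edge_sum (G : SimpleGraph V) [DecidableRel G.Adj]
    (f : Sym2 V → ℝ) :
    ∑ d : G.Dart, f d.edge = ∑ e ∈ G.edgeFinset, 2 * f e := by
  rw [← Finset.sum_fiberwise_of_maps_to (g := SimpleGraph.Dart.edge)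
    (t := G.edgeFinset)
    (fun d _ => by rw [SimpleGraph.mem_edgeFinset]; exact d.edge_mem) (fun d => f d.edge)]
  refine Finset.sum_congr rfl fun e he => ?_
  have hcard : #(Finset.univ.filter (fun d : G.Dart => d.edge = e)) = 2 :=
    G.dart_edge_fiber_card e (SimpleGraph.mem_edgeFinset.mp he)
  calc ∑ d ∈ Finset.univ.filter (fun d : G.Dart => d.edge = e), f d.edge
      = ∑ _d ∈ Finset.univ.filter (fun d : G.Dart => d.edge = e), f e :=
        Finset.sum_congr rfl fun d hd => by rw [(Finset.mem_filter.mp hd).2]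
    _ = 2 * f e := by rw [Finset.sum_const, hcard]; simp

lemma sum_nbhd_eq_sum_darts (G : SimpleGraph V) [DecidableRel G.Adj]
    (F : V → V → ℝ) :
    ∑ u, ∑ v ∈ G.neighborFinset u, F u v = ∑ d : G.Dart, F d.fst d.snd := by
  have h1 : ∑ u, ∑ v ∈ G.neighborFinset u, F u v
      = ∑ p ∈ Finset.univ.filter (fun p : V × V => G.Adj p.1 p.2), F p.1 p.2 := by
    rw [Finset.sum_filter, Fintype.sum_prod_type]
    refine Finset.sum_congr rfl fun u _ => ?_
    rw [SimpleGraph.neighborFinset_eq_filter, Finset.sum_filter]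
  rw [h1]
  refine Finset.sum_bij'
    (i := fun p hp => SimpleGraph.Dart.mk p (Finset.mem_filter.mp hp).2)
    (j := fun d _ => d.toProd) ?_ ?_ ?_ ?_ ?_
  · intro p hp; exact Finset.mem_univ _
  · intro d _; simp [d.adj]
  · intro p hp; rfl
  · intro d _; rfl
  · intro p hp; rfl

theorem randic_ge_m_div_mu (G : SimpleGraph V) [DecidableRel G.Adj] :
    (G.edgeFinset.card : ℝ) / specRad G ≤ randic G := by
  classical
  set m : ℕ := G.edgeFinset.card with hm
  rcases Nat.eq_zero_or_pos m with h0 | hmpos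
  · have he : G.edgeFinset = ∅ := Finset.card_eq_zero.mp h0
    have : randic G = 0 := by rw [randic, he, Finset.sum_empty]
    rw [this, h0]
    simp
  · -- the main case
    obtain ⟨e₀, he₀⟩ := Finset.card_pos.mp hmpos
    haveI : Nonempty V := ⟨e₀.out.1⟩
    have hA : (G.adjMatrix ℝ).IsHermitian := by
      rw [Matrix.IsHermitian, Matrix.conjTranspose_eq_transpose_of_trivial]
      exact SimpleGraph.isSymm_adjMatrix G
    have hspec : specRad G = ⨆ i, hA.eigenvalues i := rfl
    set μ : ℝ := specRad G with hμdef
    set x : V → ℝ := fun v => Real.sqrt (G.degree v) with hx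
    set fs : Sym2 V → ℝ := Sym2.lift ⟨fun u v => Real.sqrt ((G.degree u : ℝ) * G.degree v),
      fun u v => by simp [mul_comm]⟩ with hfs
    set rs : Sym2 V → ℝ := Sym2.lift ⟨fun u v => 1 / Real.sqrt ((G.degree u : ℝ) * G.degree v),
      fun u v => by simp [mul_comm]⟩ with hrs
    have hedge : ∀ e ∈ G.edgeFinset, 0 < fs e ∧ rs e = 1 / fs e := by
      intro e he
      induction e with
      | _ u v =>
        rw [SimpleGraph.mem_edgeFinset, SimpleGraph.mem_edgeSet] at he
        have hdu : 0 < G.degree u := by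
          rw [G.degree_pos_iff_exists_adj]; exact ⟨v, he⟩
        have hdv : 0 < G.degree v := by
          rw [G.degree_pos_iff_exists_adj]; exact ⟨u, he.symm⟩
        have hprod : (0:ℝ) < (G.degree u : ℝ) * G.degree v := by positivity
        constructor
        · simpa [hfs] using Real.sqrt_pos.mpr hprod
        · simp [hfs, hrs]
    -- the Rayleigh step
    have hxAx : x ⬝ᵥ ((G.adjMatrix ℝ) *ᵥ x) = ∑ e ∈ G.edgeFinset, 2 * fs e := by
      have h1 : x ⬝ᵥ ((G.adjMatrix ℝ) *ᵥ x)
          = ∑ u, ∑ v ∈ G.neighborFinset u, x u * x v := by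
        simp only [dotProduct, SimpleGraph.adjMatrix_mulVec_apply, Finset.mul_sum]
      rw [h1]
      have h2 : ∀ u, ∀ v ∈ G.neighborFinset u, x u * x v
          = Real.sqrt ((G.degree u : ℝ) * G.degree v) := by
        intro u v _
        rw [hx]
        exact (Real.sqrt_mul (Nat.cast_nonneg _) _).symm
      rw [Finset.sum_congr rfl fun u _ => Finset.sum_congr rfl (h2 u)]
      rw [sum_nbhd_eq_sum_darts G (fun u v => Real.sqrt ((G.degree u : ℝ) * G.degree v))]
      rw [← sum_darts_eq_twice_edge_sum G fs]
      rfl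
    have hxx : x ⬝ᵥ x = 2 * (m : ℝ) := by
      have : ∀ v : V, x v * x v = (G.degree v : ℝ) := fun v =>
        Real.mul_self_sqrt (Nat.cast_nonneg _)
      rw [dotProduct, Finset.sum_congr rfl fun v _ => this v]
      rw [← Nat.cast_sum, G.sum_degrees_eq_twice_card_edges]
      push_cast
      ring
    have hray := rayleigh_aux hA x
    rw [hxAx, hxx, ← hspec] at hray
    set S : ℝ := ∑ e ∈ G.edgeFinset, fs e with hS
    have hSle : 2 * S ≤ μ * (2 * (m:ℝ)) := by
      rw [hS, Finset.mul_sum]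
      exact hray
    have hSμm : S ≤ μ * m := by nlinarith
    have hSpos : 0 < S :=
      Finset.sum_pos (fun e he => (hedge e he).1) ⟨e₀, he₀⟩
    have hμpos : 0 < μ := by
      by_contra h
      push_neg at h
      have : μ * m ≤ 0 := mul_nonpos_of_nonpos_of_nonneg h (Nat.cast_nonneg _)
      linarith
    have hRnonneg : 0 ≤ randic G := by
      refine Finset.sum_nonneg fun e he => ?_
      have := (hedge e he).2
      have h1 := (hedge e he).1
      rw [show (Sym2.lift ⟨fun u v => 1 / Real.sqrt ((G.degree u : ℝ) * G.degree v),
        fun u v => by simp [mul_comm]⟩ : Sym2 V → ℝ) e = rs e from rfl, this]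
      exact div_nonneg zero_le_one h1.le
    -- Cauchy–Schwarz
    have hCS : ((m : ℝ)) ^ 2 ≤ S * randic G := by
      have heq : randic G = ∑ e ∈ G.edgeFinset, rs e := rfl
      have := Finset.sum_sq_le_sum_mul_sum_of_sq_eq_mul G.edgeFinset
        (r := fun _ => (1:ℝ)) (f := fs) (g := rs)
        (fun e he => le_of_lt (hedge e he).1)
        (fun e he => by rw [(hedge e he).2]; exact div_nonneg zero_le_one (hedge e he).1.le)
        (fun e he => by
          rw [(hedge e he).2, one_pow, mul_one_div, div_self (ne_of_gt (hedge e he).1)])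
      simpa [heq, hm] using this
    have hfin : (m : ℝ) ≤ μ * randic G := by
      have hmr : (0:ℝ) < m := by exact_mod_cast hmpos
      have h2 : ((m : ℝ)) ^ 2 ≤ (μ * m) * randic G :=
        le_trans hCS (mul_le_mul_of_nonneg_right hSμm hRnonneg)
      nlinarith
    rw [div_le_iff₀ hμpos]
    linarith [mul_comm μ (randic G) ▸ hfin]
end

section
/- For any graph G with m edges, √(s⁺) ≤ (√(8m+1) − 1)/2, where s⁺ is the sum of squares of the positive adjacency eigenvalues of G. -/
open Finset

variable {V : Type*} [Fintype V] [DecidableEq V]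

lemma exists_min_coloring (G : SimpleGraph V) [DecidableRel G.Adj] :
    ∃ (k : ℕ) (_C : G.Coloring (Fin k)), k * (k - 1) ≤ 2 * G.edgeFinset.card := by
  classical
  have hcol : ∃ n, G.Colorable n := ⟨Fintype.card V, G.colorable_of_fintype⟩
  set k := Nat.find hcol with hkdef
  obtain ⟨C⟩ : G.Colorable k := Nat.find_spec hcol
  refine ⟨k, C, ?_⟩
  -- every pair of distinct colors is joined by an edge
  have hpair : ∀ i j : Fin k, i ≠ j → ∃ u v, G.Adj u v ∧ C u = i ∧ C v = j := by
    intro i j hij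
    by_contra hno
    push_neg at hno
    have hk0 : 0 < k := i.pos
    -- recolor i to j
    have hvalid : ∀ ⦃u v⦄, G.Adj u v →
        (if C u = i then j else C u) ≠ (if C v = i then j else C v) := by
      intro u v huv
      have hCuv : C u ≠ C v := C.valid huv
      by_cases hu : C u = i <;> by_cases hv : C v = i
      · exact absurd (hu.trans hv.symm) hCuv
      · simp only [hu, if_pos, if_neg hv]
        intro h
        exact hno u v huv hu h.symm
      · simp only [hv, if_pos, if_neg hu]
        intro h
        exact hno v u huv.symm hv h
      · simpa [if_neg hu, if_neg hv] using hCuv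
    have hne : ∀ v, (if C v = i then j else C v) ≠ i := by
      intro v; by_cases h : C v = i <;> simp [h, hij.symm, Ne.symm hij]
    let C' : G.Coloring {x : Fin k // x ≠ i} :=
      SimpleGraph.Coloring.mk (fun v => ⟨if C v = i then j else C v, hne v⟩)
        (fun {u v} huv => by simpa [Subtype.ext_iff] using hvalid huv)
    have hcard : Fintype.card {x : Fin k // x ≠ i} = k - 1 := by
      simp [Fintype.card_subtype_compl]
    have : G.Colorable (k - 1) := hcard ▸ C'.colorable
    exact Nat.find_min hcol (by omega) this
  -- surjection from edges onto non-diagonal Sym2 (Fin k)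
  have hsurj : Set.SurjOn (Sym2.map C) (G.edgeFinset : Set (Sym2 V))
      ((Finset.univ.filter (fun z : Sym2 (Fin k) => ¬ z.IsDiag)) : Set (Sym2 (Fin k))) := by
    intro z hz
    simp only [coe_filter, Set.mem_setOf_eq, mem_univ, true_and] at hz
    induction z using Sym2.ind with
    | _ i j =>
      have hij : i ≠ j := by simpa using hz
      obtain ⟨u, v, huv, hu, hv⟩ := hpair i j hij
      refine ⟨s(u, v), ?_, ?_⟩
      · simpa [SimpleGraph.mem_edgeFinset] using huv
      · simp [hu, hv]
  have hcount := Finset.card_le_card_of_surjOn _ hsurj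
  have hfcard : (Finset.univ.filter (fun z : Sym2 (Fin k) => ¬ z.IsDiag)).card
      = k.choose 2 := by
    rw [(Fintype.card_subtype _).symm, Sym2.card_subtype_not_diag, Fintype.card_fin]
  have h2 : k.choose 2 ≤ G.edgeFinset.card := by omega
  have : k * (k - 1) = 2 * k.choose 2 := by
    rcases k with _ | k'
    · simp
    · rw [Nat.choose_two_right]
      simp only [Nat.succ_sub_one]
      have h3 : 2 ∣ (k' + 1) * k' := by
        simpa [mul_comm] using (Nat.even_mul_succ_self k').two_dvd
      rw [Nat.mul_div_cancel' h3]
  omega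


/-- Entrywise inner product of square matrices. -/
noncomputable def Jip (X Y : Matrix V V ℝ) : ℝ := ∑ u, ∑ v, X u v * Y u v

omit [DecidableEq V] in
lemma Jip_self_nonneg (X : Matrix V V ℝ) : 0 ≤ Jip X X :=
  Finset.sum_nonneg fun _ _ => Finset.sum_nonneg fun _ _ => mul_self_nonneg _

omit [DecidableEq V] in
lemma Jip_cs (X Y : Matrix V V ℝ) : (Jip X Y) ^ 2 ≤ Jip X X * Jip Y Y := by
  have h1 : Jip X Y = ∑ p : V × V, X p.1 p.2 * Y p.1 p.2 := by
    rw [Jip]; exact (Fintype.sum_prod_type (f := fun p => X p.1 p.2 * Y p.1 p.2)).symm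
  have h2 : Jip X X = ∑ p : V × V, (X p.1 p.2) ^ 2 := by
    rw [Jip]
    rw [show (∑ p : V × V, (X p.1 p.2) ^ 2) = ∑ x, ∑ y, (X x y)^2 from
      Fintype.sum_prod_type (f := fun p => (X p.1 p.2) ^ 2)]
    simp [pow_two]
  have h3 : Jip Y Y = ∑ p : V × V, (Y p.1 p.2) ^ 2 := by
    rw [Jip]
    rw [show (∑ p : V × V, (Y p.1 p.2) ^ 2) = ∑ x, ∑ y, (Y x y)^2 from
      Fintype.sum_prod_type (f := fun p => (Y p.1 p.2) ^ 2)]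
    simp [pow_two]
  rw [h1, h2, h3]
  exact Finset.sum_mul_sq_le_sq_mul_sq _ _ _

omit [DecidableEq V] in
lemma Jip_comm (X Y : Matrix V V ℝ) : Jip X Y = Jip Y X := by
  rw [Jip, Jip]
  exact Finset.sum_congr rfl fun u _ => Finset.sum_congr rfl fun v _ => mul_comm _ _

omit [DecidableEq V] in
lemma Jip_sub_left (X Y Z : Matrix V V ℝ) : Jip (X - Y) Z = Jip X Z - Jip Y Z := by
  simp only [Jip, Matrix.sub_apply, sub_mul, Finset.sum_sub_distrib]

omit [DecidableEq V] in
lemma Jip_sub_right (X Y Z : Matrix V V ℝ) : Jip X (Y - Z) = Jip X Y - Jip X Z := by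
  simp only [Jip, Matrix.sub_apply, mul_sub, Finset.sum_sub_distrib]

lemma nat_km_cast (k c : ℕ) (h : k * (k - 1) ≤ 2 * c) :
    (k : ℝ) * ((k : ℝ) - 1) ≤ 2 * (c : ℝ) := by
  rcases k with _ | k'
  · norm_num
  · have h' : ((k' + 1) * k' : ℕ) ≤ 2 * c := by
      calc ((k' + 1) * k' : ℕ) = (k' + 1) * (k' + 1 - 1) := by simp
        _ ≤ 2 * c := h
    have hc : (((k' + 1) * k' : ℕ) : ℝ) ≤ ((2 * c : ℕ) : ℝ) := Nat.cast_le.mpr h'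
    push_cast at hc
    push_cast
    nlinarith [hc]

lemma numeric_part (k : ℕ) (β γ e m : ℝ) (hβ0 : 0 ≤ β) (hγ0 : 0 ≤ γ) (he0 : 0 ≤ e)
    (hm : β + γ = 2 * m) (hkey : β ≤ (k : ℝ) * e) (hCS : β ^ 2 ≤ (β - e) * (β + γ))
    (hkm : (k : ℝ) * ((k : ℝ) - 1) ≤ 2 * m) :
    Real.sqrt β ≤ (Real.sqrt (8 * m + 1) - 1) / 2 := by
  have hm0 : 0 ≤ m := by nlinarith
  have hβγ2 : β ≤ γ ^ 2 := by
    rcases eq_or_lt_of_le hβ0 with h0 | hpos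
    · nlinarith [sq_nonneg γ]
    · have hE : e * (β + γ) ≤ β * γ := by nlinarith [hCS]
      have hk1 : (1 : ℝ) ≤ (k : ℝ) := by
        rcases Nat.eq_zero_or_pos k with hk | hk
        · exfalso
          rw [hk] at hkey
          norm_num at hkey
          nlinarith [hkey]
        · exact_mod_cast hk
      have hstep : β + γ ≤ (k : ℝ) * γ := by
        have hbg : (0:ℝ) ≤ β + γ := by linarith
        have h1 : β * (β + γ) ≤ (k : ℝ) * e * (β + γ) := by nlinarith [hkey]
        have h2 : (k : ℝ) * e * (β + γ) ≤ (k : ℝ) * (β * γ) := by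
          have hk0 : (0:ℝ) ≤ k := by linarith
          nlinarith [hE]
        nlinarith [h1, h2, hpos]
      have hγk : (k : ℝ) - 1 ≤ γ := by nlinarith [hstep, hm, hkm, hk1]
      nlinarith [hstep, hγk, hγ0]
  have hsqrtβ : Real.sqrt β ≤ γ := by
    have h := Real.sqrt_le_sqrt hβγ2
    rwa [Real.sqrt_sq hγ0] at h
  set t := Real.sqrt β with htdef
  have ht0 : 0 ≤ t := Real.sqrt_nonneg _
  have ht2 : t ^ 2 = β := Real.sq_sqrt hβ0
  have hsq : (2 * t + 1) ^ 2 ≤ 8 * m + 1 := by nlinarith [hsqrtβ, ht2, hm, hγ0]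
  have h2t : 2 * t + 1 ≤ Real.sqrt (8 * m + 1) := by
    rw [← Real.sqrt_sq (by linarith : (0:ℝ) ≤ 2 * t + 1)]
    exact Real.sqrt_le_sqrt hsq
  linarith [h2t]

/-- Key PSD block lemma. -/
lemma key_psd (R : Matrix V V ℝ) (hR : R.IsSymm) {k : ℕ} (c : V → Fin k) :
    Jip (R * R) (R * R) ≤
      k * ∑ u, ∑ v, (if c u = c v then ((R * R) u v) ^ 2 else 0) := by
  classical
  rcases k with _ | k'
  case zero =>
    have : IsEmpty V := ⟨fun v => (c v).elim0⟩
    simp [Jip]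
  case succ =>
    set B := R * R with hB
    set F : Fin (k' + 1) → Fin (k' + 1) → ℝ := fun s t =>
      ∑ u ∈ univ.filter (fun u => c u = s), ∑ v ∈ univ.filter (fun v => c v = t),
        (B u v) ^ 2 with hF
    set H : Fin (k' + 1) → Matrix V V ℝ := fun s => fun a b =>
      ∑ u ∈ univ.filter (fun u => c u = s), R u a * R u b with hH
    have hRsymm : ∀ a b, R a b = R b a := fun a b => by
      conv_lhs => rw [← hR]
      rfl
    have claim1 : ∀ s t, Jip (H s) (H t) = F s t := by
      intro s t
      rw [Jip, hF]
      simp only [hH]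
      calc (∑ a, ∑ b, (∑ u ∈ univ.filter (fun u => c u = s), R u a * R u b) *
              (∑ v ∈ univ.filter (fun v => c v = t), R v a * R v b))
          = ∑ a, ∑ b, ∑ u ∈ univ.filter (fun u => c u = s),
              ∑ v ∈ univ.filter (fun v => c v = t), (R u a * R v a) * (R u b * R v b) := by
            refine Finset.sum_congr rfl fun a _ => Finset.sum_congr rfl fun b _ => ?_
            rw [Finset.sum_mul_sum]
            exact Finset.sum_congr rfl fun u _ => Finset.sum_congr rfl fun v _ => by ring
        _ = ∑ a, ∑ u ∈ univ.filter (fun u => c u = s), ∑ b,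
              ∑ v ∈ univ.filter (fun v => c v = t), (R u a * R v a) * (R u b * R v b) := by
            exact Finset.sum_congr rfl fun a _ => Finset.sum_comm
        _ = ∑ u ∈ univ.filter (fun u => c u = s), ∑ a, ∑ b,
              ∑ v ∈ univ.filter (fun v => c v = t), (R u a * R v a) * (R u b * R v b) :=
            Finset.sum_comm
        _ = ∑ u ∈ univ.filter (fun u => c u = s), ∑ a,
              ∑ v ∈ univ.filter (fun v => c v = t), ∑ b, (R u a * R v a) * (R u b * R v b) := by
            exact Finset.sum_congr rfl fun u _ => Finset.sum_congr rfl fun a _ =>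
              Finset.sum_comm
        _ = ∑ u ∈ univ.filter (fun u => c u = s), ∑ v ∈ univ.filter (fun v => c v = t),
              ∑ a, ∑ b, (R u a * R v a) * (R u b * R v b) := by
            exact Finset.sum_congr rfl fun u _ => Finset.sum_comm
        _ = ∑ u ∈ univ.filter (fun u => c u = s), ∑ v ∈ univ.filter (fun v => c v = t),
              (∑ a, R u a * R v a) * (∑ b, R u b * R v b) := by
            refine Finset.sum_congr rfl fun u _ => Finset.sum_congr rfl fun v _ => ?_
            rw [Finset.sum_mul_sum]
        _ = ∑ u ∈ univ.filter (fun u => c u = s), ∑ v ∈ univ.filter (fun v => c v = t),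
              (B u v) ^ 2 := by
            refine Finset.sum_congr rfl fun u _ => Finset.sum_congr rfl fun v _ => ?_
            have hBa : (∑ a, R u a * R v a) = B u v := by
              rw [hB, Matrix.mul_apply]
              exact Finset.sum_congr rfl fun a _ => by rw [hRsymm v a]
            rw [hBa, pow_two]
    have hFnonneg : ∀ s t, 0 ≤ F s t := fun s t =>
      Finset.sum_nonneg fun _ _ => Finset.sum_nonneg fun _ _ => sq_nonneg _
    have claim2 : ∀ s t, F s t ≤ (F s s + F t t) / 2 := by
      intro s t
      have hcs := Jip_cs (H s) (H t)
      rw [claim1 s t, claim1 s s, claim1 t t] at hcs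
      nlinarith [hFnonneg s t, hFnonneg s s, hFnonneg t t, sq_nonneg (F s s - F t t)]
    have htotal : Jip B B = ∑ s, ∑ t, F s t := by
      rw [Jip, hF]
      rw [← Finset.sum_fiberwise (univ : Finset V) c (fun u => ∑ v, B u v * B u v)]
      refine Finset.sum_congr rfl fun s _ => ?_
      calc ∑ u ∈ univ.filter (fun u => c u = s), ∑ v, B u v * B u v
          = ∑ u ∈ univ.filter (fun u => c u = s), ∑ t,
              ∑ v ∈ univ.filter (fun v => c v = t), B u v * B u v :=
            Finset.sum_congr rfl fun u _ =>
              (Finset.sum_fiberwise (univ : Finset V) c (fun v => B u v * B u v)).symm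
        _ = ∑ t, ∑ u ∈ univ.filter (fun u => c u = s),
              ∑ v ∈ univ.filter (fun v => c v = t), B u v * B u v := Finset.sum_comm
        _ = ∑ t, ∑ u ∈ univ.filter (fun u => c u = s),
              ∑ v ∈ univ.filter (fun v => c v = t), B u v ^ 2 := by
            refine Finset.sum_congr rfl fun t _ => Finset.sum_congr rfl fun u _ =>
              Finset.sum_congr rfl fun v _ => (pow_two _).symm
    have hdiag : (∑ u, ∑ v, (if c u = c v then (B u v) ^ 2 else 0)) = ∑ s, F s s := by
      rw [← Finset.sum_fiberwise (univ : Finset V) c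
        (fun u => ∑ v, (if c u = c v then (B u v) ^ 2 else 0))]
      refine Finset.sum_congr rfl fun s _ => Finset.sum_congr rfl fun u hu => ?_
      simp only [Finset.mem_filter] at hu
      rw [hu.2, ← Finset.sum_filter]
      exact Finset.sum_congr (by ext v; simp [eq_comm]) fun v _ => rfl
    have hconst : ∀ (x : ℝ) (s : Fin (k' + 1)), (∑ _t ∈ univ.erase s, x) = (k' : ℝ) * x := by
      intro x s
      rw [Finset.sum_const, Finset.card_erase_of_mem (mem_univ s), Finset.card_univ,
        Fintype.card_fin, nsmul_eq_mul]
      norm_num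
    have hswap : ∑ s, ∑ t ∈ univ.erase s, F t t = ∑ s, ∑ t ∈ univ.erase s, F s s := by
      rw [Finset.sum_comm' (s' := fun t => univ.erase t) (t' := univ)
        (fun x y => by simp [eq_comm, and_comm])]
    have hsplit : ∑ s, ∑ t, F s t = ∑ s, F s s + ∑ s, ∑ t ∈ univ.erase s, F s t := by
      rw [← Finset.sum_add_distrib]
      exact Finset.sum_congr rfl fun s _ => (Finset.add_sum_erase _ _ (mem_univ s)).symm
    have hoff : ∑ s, ∑ t ∈ univ.erase s, F s t ≤ (k' : ℝ) * ∑ s, F s s := by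
      calc ∑ s, ∑ t ∈ univ.erase s, F s t
          ≤ ∑ s, ∑ t ∈ univ.erase s, (F s s + F t t) / 2 :=
            Finset.sum_le_sum fun s _ => Finset.sum_le_sum fun t _ => claim2 s t
        _ = (∑ s, ∑ t ∈ univ.erase s, F s s) / 2 + (∑ s, ∑ t ∈ univ.erase s, F t t) / 2 := by
            simp only [add_div, Finset.sum_add_distrib, Finset.sum_div]
        _ = (k' : ℝ) * ∑ s, F s s := by
            rw [hswap]
            rw [Finset.sum_congr rfl fun s _ => hconst (F s s) s]
            rw [← Finset.mul_sum]
            ring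
    rw [htotal, hdiag, hsplit]
    have hkcast : ((k' + 1 : ℕ) : ℝ) = (k' : ℝ) + 1 := by push_cast; ring
    rw [hkcast]
    nlinarith [Finset.sum_nonneg (fun s (_ : s ∈ (univ : Finset (Fin (k' + 1)))) => hFnonneg s s), hoff]

theorem sqrt_sPlus_le (G : SimpleGraph V) [DecidableRel G.Adj] :
    Real.sqrt (sPlus G) ≤ (Real.sqrt (8 * G.edgeFinset.card + 1) - 1) / 2  := by
  classical
  obtain ⟨k, C, hkm⟩ := exists_min_coloring G
  set A := G.adjMatrix ℝ with hAdef
  have hA : A.IsHermitian := by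
    rw [Matrix.IsHermitian, Matrix.conjTranspose_eq_transpose_of_trivial]
    exact SimpleGraph.isSymm_adjMatrix G
  have hlam : adjEigenvalues G = hA.eigenvalues := rfl
  set lam : V → ℝ := hA.eigenvalues with hlamdef
  set W : Matrix V V ℝ := (Matrix.IsHermitian.eigenvectorUnitary hA : Matrix V V ℝ) with hWdef
  have hWu : star W * W = 1 :=
    Unitary.star_mul_self_of_mem (Matrix.IsHermitian.eigenvectorUnitary hA).2
  have hspec : A = W * Matrix.diagonal lam * star W := by
    have h := hA.spectral_theorem
    rw [Unitary.conjStarAlgAut_apply] at h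
    exact h
  have conj_mul : ∀ d d' : V → ℝ,
      (W * Matrix.diagonal d * star W) * (W * Matrix.diagonal d' * star W)
        = W * Matrix.diagonal (fun i => d i * d' i) * star W := by
    intro d d'
    calc (W * Matrix.diagonal d * star W) * (W * Matrix.diagonal d' * star W)
        = W * Matrix.diagonal d * (star W * W) * (Matrix.diagonal d' * star W) := by
          simp only [Matrix.mul_assoc]
      _ = W * (Matrix.diagonal d * Matrix.diagonal d') * star W := by
          rw [hWu]
          simp only [Matrix.mul_one, Matrix.mul_assoc]
      _ = W * Matrix.diagonal (fun i => d i * d' i) * star W := by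
          rw [Matrix.diagonal_mul_diagonal]
  have trace_conj : ∀ d : V → ℝ,
      Matrix.trace (W * Matrix.diagonal d * star W) = ∑ i, d i := by
    intro d
    rw [Matrix.trace_mul_cycle, hWu, Matrix.one_mul, Matrix.trace_diagonal]
  have conj_symm : ∀ (d : V → ℝ) (u v : V),
      (W * Matrix.diagonal d * star W) u v = (W * Matrix.diagonal d * star W) v u := by
    intro d u v
    have hstar : star (W * Matrix.diagonal d * star W) = W * Matrix.diagonal d * star W := by
      simp only [star_mul, star_star, Matrix.star_eq_conjTranspose,
        Matrix.diagonal_conjTranspose]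
      simp [Matrix.mul_assoc, star_trivial]
    conv_lhs => rw [← hstar]
    rw [Matrix.star_eq_conjTranspose, Matrix.conjTranspose_apply, star_trivial]
  have Jip_eq_trace : ∀ X Y : Matrix V V ℝ, (∀ u v, Y u v = Y v u) →
      Jip X Y = Matrix.trace (X * Y) := by
    intro X Y hY
    rw [Matrix.trace]
    rw [Jip]
    refine Finset.sum_congr rfl fun u _ => ?_
    rw [Matrix.diag_apply, Matrix.mul_apply]
    exact Finset.sum_congr rfl fun v _ => by rw [hY u v]
  -- the positive and negative parts
  set f : V → ℝ := fun i => max (lam i) 0 with hfdef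
  set g : V → ℝ := fun i => max (-lam i) 0 with hgdef
  have hf0 : ∀ i, 0 ≤ f i := fun i => le_max_right _ _
  have hfg : ∀ i, f i * g i = 0 := by
    intro i
    rcases le_total (lam i) 0 with h | h
    · rw [hfdef]; simp only [max_eq_right h, zero_mul]
    · rw [hgdef]; simp only [max_eq_right (neg_nonpos.mpr h), mul_zero]
  have hfsub : ∀ i, f i - g i = lam i := by
    intro i
    rcases le_total (lam i) 0 with h | h
    · rw [hfdef, hgdef]
      simp [max_eq_right h, max_eq_left (neg_nonneg.mpr h)]
    · rw [hfdef, hgdef]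
      simp [max_eq_left h, max_eq_right (neg_nonpos.mpr h)]
  set B := W * Matrix.diagonal f * star W with hBdef
  set C2 := W * Matrix.diagonal g * star W with hC2def
  set R := W * Matrix.diagonal (fun i => Real.sqrt (f i)) * star W with hRdef
  have hRR : R * R = B := by
    rw [hRdef, conj_mul, hBdef]
    have hs : (fun i => Real.sqrt (f i) * Real.sqrt (f i)) = f :=
      funext fun i => Real.mul_self_sqrt (hf0 i)
    rw [hs]
  have hRsymm : R.IsSymm := by
    rw [Matrix.IsSymm]
    ext u v
    rw [Matrix.transpose_apply]
    exact conj_symm _ v u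
  set β := ∑ i, f i ^ 2 with hβdef
  set γ := ∑ i, g i ^ 2 with hγdef
  have hβ0 : 0 ≤ β := Finset.sum_nonneg fun i _ => sq_nonneg _
  have hγ0 : 0 ≤ γ := Finset.sum_nonneg fun i _ => sq_nonneg _
  have hsplus : sPlus G = β := by
    rw [sPlus, hβdef]
    refine Finset.sum_congr rfl fun i _ => ?_
    rw [hlam]
    by_cases h : 0 < lam i
    · rw [if_pos h, hfdef]
      simp [max_eq_left h.le]
    · rw [if_neg h, hfdef]
      push_neg at h
      simp [max_eq_right h]
  -- traces
  have hJBB : Jip B B = β := by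
    rw [Jip_eq_trace B B (conj_symm f), hBdef, conj_mul, trace_conj, hβdef]
    exact Finset.sum_congr rfl fun i _ => (pow_two _).symm
  have hJBA : Jip B A = β := by
    rw [Jip_eq_trace B A (fun u v => by
      have := G.isSymm_adjMatrix (α := ℝ)
      rw [hAdef]
      conv_lhs => rw [← this]
      rfl)]
    rw [hspec, hBdef, conj_mul, trace_conj]
    rw [hβdef]
    refine Finset.sum_congr rfl fun i _ => ?_
    rw [← hfsub i, mul_sub, hfg i, sub_zero, pow_two]
  have hJAA : Jip A A = β + γ := by
    rw [Jip_eq_trace A A (fun u v => by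
      have := G.isSymm_adjMatrix (α := ℝ)
      rw [hAdef]
      conv_lhs => rw [← this]
      rfl)]
    conv_lhs => rw [hspec]
    rw [conj_mul, trace_conj, hβdef, hγdef, ← Finset.sum_add_distrib]
    refine Finset.sum_congr rfl fun i _ => ?_
    rw [← hfsub i]
    linear_combination (-2 : ℝ) * hfg i
  have hJAAm : Jip A A = 2 * (G.edgeFinset.card : ℝ) := by
    rw [Jip]
    have hterm : ∀ u v : V, A u v * A u v = if G.Adj u v then (1:ℝ) else 0 := by
      intro u v
      rw [hAdef, SimpleGraph.adjMatrix_apply]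
      by_cases h : G.Adj u v <;> simp [h]
    calc (∑ u, ∑ v, A u v * A u v) = ∑ u, ∑ v, (if G.Adj u v then (1:ℝ) else 0) := by
          exact Finset.sum_congr rfl fun u _ => Finset.sum_congr rfl fun v _ => hterm u v
      _ = ∑ u, (G.degree u : ℝ) := by
          refine Finset.sum_congr rfl fun u _ => ?_
          rw [Finset.sum_boole, SimpleGraph.degree]
          congr 1
          rw [SimpleGraph.neighborFinset_eq_filter]
      _ = 2 * (G.edgeFinset.card : ℝ) := by
          rw [← Nat.cast_sum]
          rw [SimpleGraph.sum_degrees_eq_twice_card_edges]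
          push_cast
          ring
  -- D part
  set DB : Matrix V V ℝ := Matrix.of (fun u v => if C u = C v then B u v else 0) with hDBdef
  set e := ∑ u, ∑ v, (if C u = C v then (B u v) ^ 2 else 0) with hedef
  have he0 : 0 ≤ e := Finset.sum_nonneg fun u _ => Finset.sum_nonneg fun v _ => by positivity
  have hkey : β ≤ (k : ℝ) * e := by
    have h := key_psd R hRsymm C
    rw [hRR] at h
    rw [← hJBB]
    exact h
  have hJDBA : Jip DB A = 0 := by
    rw [Jip]
    refine Finset.sum_eq_zero fun u _ => Finset.sum_eq_zero fun v _ => ?_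
    rw [hDBdef]
    simp only [Matrix.of_apply]
    by_cases h : C u = C v
    · rw [if_pos h]
      have hnadj : ¬ G.Adj u v := fun hadj => (C.valid hadj) h
      rw [hAdef, SimpleGraph.adjMatrix_apply, if_neg hnadj, mul_zero]
    · rw [if_neg h, zero_mul]
  have hJBDB : Jip B DB = e := by
    rw [Jip, hedef]
    refine Finset.sum_congr rfl fun u _ => Finset.sum_congr rfl fun v _ => ?_
    rw [hDBdef]
    simp only [Matrix.of_apply, mul_ite, mul_zero]
    by_cases h : C u = C v <;> simp [h, pow_two]
  have hJDBDB : Jip DB DB = e := by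
    rw [Jip, hedef]
    refine Finset.sum_congr rfl fun u _ => Finset.sum_congr rfl fun v _ => ?_
    rw [hDBdef]
    simp only [Matrix.of_apply]
    by_cases h : C u = C v <;> simp [h, pow_two]
  -- Cauchy-Schwarz
  have hJsubA : Jip (B - DB) A = β := by
    rw [Jip_sub_left, hJBA, hJDBA, sub_zero]
  have hJsubsub : Jip (B - DB) (B - DB) = β - e := by
    rw [Jip_sub_left, Jip_sub_right, Jip_sub_right, Jip_comm DB B, hJBB, hJBDB, hJDBDB]
    ring
  have hCS : β ^ 2 ≤ (β - e) * (β + γ) := by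
    have h := Jip_cs (B - DB) A
    rwa [hJsubA, hJsubsub, hJAA] at h
  -- numeric part
  set mR : ℝ := (G.edgeFinset.card : ℝ) with hmRdef
  have hmR0 : 0 ≤ mR := Nat.cast_nonneg _
  have hm : β + γ = 2 * mR := by rw [← hJAA, hJAAm]
  have hkmR : (k : ℝ) * ((k : ℝ) - 1) ≤ 2 * mR :=
    nat_km_cast k G.edgeFinset.card hkm
  have hfinal := numeric_part k β γ e mR hβ0 hγ0 he0 hm hkey hCS hkmR
  rw [hsplus]
  exact hfinal
end
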